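/- arXiv:0707.2008 — 10 statements merged into one kernel-verified Lean document; each statement's English description precedes it below -/
import Mathlib

section
/- Let H be a real Hilbert space, let C be a family of closed subspaces of H containing the zero subspace that has the Minimal Approximation Property, let F = (f_1, …, f_m) be a finite family of vectors in H, and let l ≥ 1. If (c_0, V_0) is a Γ-minimal pair (in particular V_0 is a best bundle for the labeling c_0), then e(F, V_0) = Γ(c_0, V_0). -/
open Metric Finset

/-- Total squared distance from a finite family `F` to a closed subspace `V`. -/
noncomputable def totalErr {H : Type*} [NormedAddCommGroup H] [InnerProductSpace ℝ H]
    {m : ℕ} (F : Fin m → H) (V : Submodule ℝ H) : ℝ :=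
  ∑ i, Metric.infDist (F i) (V : Set H) ^ 2

/-- The Minimal Approximation Property for a family `C` of subspaces of `H`. -/
def HasMAP {H : Type*} [NormedAddCommGroup H] [InnerProductSpace ℝ H]
    (C : Set (Submodule ℝ H)) : Prop :=
  ∀ (m : ℕ) (F : Fin m → H), ∃ V0 ∈ C, ∀ V ∈ C, totalErr F V0 ≤ totalErr F V

/-- The objective `e(F, V)`: sum over the data of the squared distance to the
closest subspace of the bundle. -/
noncomputable def eBundle {H : Type*} [NormedAddCommGroup H] [InnerProductSpace ℝ H]
    {m l : ℕ} (F : Fin m → H) (V : Fin l → Submodule ℝ H) : ℝ :=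
  ∑ i, ⨅ j, Metric.infDist (F i) (V j : Set H) ^ 2

/-- `Γ(c, V)` for a labeling `c` and a bundle `V`. -/
noncomputable def Gamma {H : Type*} [NormedAddCommGroup H] [InnerProductSpace ℝ H]
    {m l : ℕ} (F : Fin m → H) (c : Fin m → Fin l) (V : Fin l → Submodule ℝ H) : ℝ :=
  ∑ i, Metric.infDist (F i) (V (c i) : Set H) ^ 2

/-- `V ∈ W(c)`: `V` is a best bundle for the labeling `c`. -/
def IsBestBundle {H : Type*} [NormedAddCommGroup H] [InnerProductSpace ℝ H]
    (C : Set (Submodule ℝ H)) {m l : ℕ} (F : Fin m → H)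
    (c : Fin m → Fin l) (V : Fin l → Submodule ℝ H) : Prop :=
  (∀ j, V j ∈ C) ∧ ∀ j, ∀ W ∈ C,
    ∑ i ∈ Finset.univ.filter (fun i => c i = j), Metric.infDist (F i) (V j : Set H) ^ 2 ≤
      ∑ i ∈ Finset.univ.filter (fun i => c i = j), Metric.infDist (F i) (W : Set H) ^ 2

/-- A `Γ`-minimal pair. -/
def IsGammaMinimal {H : Type*} [NormedAddCommGroup H] [InnerProductSpace ℝ H]
    (C : Set (Submodule ℝ H)) {m l : ℕ} (F : Fin m → H)
    (c0 : Fin m → Fin l) (V0 : Fin l → Submodule ℝ H) : Prop :=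
  IsBestBundle C F c0 V0 ∧
    ∀ (c : Fin m → Fin l) (V : Fin l → Submodule ℝ H),
      IsBestBundle C F c V → Gamma F c0 V0 ≤ Gamma F c V

/-- If `(c₀, V₀)` is a `Γ`-minimal pair then `e(F, V₀) = Γ(c₀, V₀)`. -/
theorem eBundle_eq_Gamma_of_isGammaMinimal
    {H : Type*} [NormedAddCommGroup H] [InnerProductSpace ℝ H] [CompleteSpace H]
    (C : Set (Submodule ℝ H)) (hC : ∀ V ∈ C, IsClosed (V : Set H))
    (hbot : (⊥ : Submodule ℝ H) ∈ C) (hMAP : HasMAP C)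
    {m l : ℕ} (F : Fin m → H) (hl : 1 ≤ l)
    (c0 : Fin m → Fin l) (V0 : Fin l → Submodule ℝ H)
    (hmin : IsGammaMinimal C F c0 V0) :
    eBundle F V0 = Gamma F c0 V0 := by
  classical
  have hne : Nonempty (Fin l) := ⟨⟨0, hl⟩⟩
  set d : Fin m → Fin l → ℝ := fun i j => Metric.infDist (F i) (V0 j : Set H) ^ 2 with hd
  -- argmin labeling
  have hargmin : ∀ i, ∃ j, ∀ k, d i j ≤ d i k := fun i => Finite.exists_min (d i)
  choose c hc using hargmin
  have hinf : ∀ i, (⨅ j, d i j) = d i (c i) := fun i =>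
    le_antisymm (ciInf_le (Set.finite_range _).bddBelow _) (le_ciInf (hc i))
  have heΓ : eBundle F V0 = Gamma F c V0 :=
    Finset.sum_congr rfl (fun i _ => hinf i)
  -- e ≤ Γ(c0, V0)
  have heLe : eBundle F V0 ≤ Gamma F c0 V0 :=
    Finset.sum_le_sum (fun i _ => ciInf_le (Set.finite_range _).bddBelow (c0 i))
  -- build a best bundle for c using MAP
  have hbest : ∀ j : Fin l, ∃ Vj ∈ C, ∀ W ∈ C,
      ∑ i ∈ Finset.univ.filter (fun i => c i = j), Metric.infDist (F i) (Vj : Set H) ^ 2 ≤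
      ∑ i ∈ Finset.univ.filter (fun i => c i = j), Metric.infDist (F i) (W : Set H) ^ 2 := by
    intro j
    set s := Finset.univ.filter (fun i => c i = j) with hs
    obtain ⟨Vj, hVjC, hVj⟩ := hMAP s.card (fun k => F ((s.orderIsoOfFin rfl k : Fin m)))
    have key : ∀ U : Submodule ℝ H,
        totalErr (fun k => F ((s.orderIsoOfFin rfl k : Fin m))) U
        = ∑ i ∈ s, Metric.infDist (F i) (U : Set H) ^ 2 := by
      intro U
      rw [totalErr, ← Finset.sum_attach s (fun i => Metric.infDist (F i) (U : Set H) ^ 2)]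
      exact Fintype.sum_equiv (s.orderIsoOfFin rfl).toEquiv _ _ (fun k => rfl)
    refine ⟨Vj, hVjC, fun W hW => ?_⟩
    have := hVj W hW
    rwa [key Vj, key W] at this
  choose V hVC hV using hbest
  have hbb : IsBestBundle C F c V := ⟨hVC, hV⟩
  have hfiber : ∀ U : Fin l → Submodule ℝ H, Gamma F c U =
      ∑ j, ∑ i ∈ Finset.univ.filter (fun i => c i = j),
        Metric.infDist (F i) (U j : Set H) ^ 2 := by
    intro U
    rw [Gamma, ← Finset.sum_fiberwise Finset.univ c
      (fun i => Metric.infDist (F i) (U (c i) : Set H) ^ 2)]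
    refine Finset.sum_congr rfl (fun j _ => Finset.sum_congr rfl (fun i hi => ?_))
    rw [(Finset.mem_filter.mp hi).2]
  have h1 : Gamma F c0 V0 ≤ Gamma F c V := hmin.2 c V hbb
  have h2 : Gamma F c V ≤ Gamma F c V0 := by
    rw [hfiber V, hfiber V0]
    exact Finset.sum_le_sum (fun j _ => hV j (V0 j) (hmin.1.1 j))
  have : Gamma F c V0 = Gamma F c0 V0 :=
    le_antisymm (heΓ ▸ heLe) (le_trans h1 h2)
  rw [heΓ, this]
end

section
/- Let H be a real Hilbert space, let C be a family of closed subspaces of H containing the zero subspace that has the Minimal Approximation Property, let F = (f_1, …, f_m) be a finite family of vectors in H, and let l ≥ 1. Then there exists a bundle V_0 = (V_1^0, …, V_l^0) with each V_j^0 ∈ C such that e(F, V_0) ≤ e(F, V) for every bundle V = (V_1, …, V_l) with components in C. -/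
open Metric Finset

/-- MAP for subfamilies indexed by a finset. -/
lemma hasMAP_finset {H : Type*} [NormedAddCommGroup H] [InnerProductSpace ℝ H]
    {C : Set (Submodule ℝ H)} (hMAP : HasMAP C) {m : ℕ} (F : Fin m → H)
    (s : Finset (Fin m)) :
    ∃ V0 ∈ C, ∀ V ∈ C,
      ∑ i ∈ s, Metric.infDist (F i) (V0 : Set H) ^ 2 ≤
        ∑ i ∈ s, Metric.infDist (F i) (V : Set H) ^ 2 := by
  set k := s.card with hk
  set F' : Fin k → H := fun t => F (s.orderIsoOfFin hk.symm t)
  have key : ∀ V : Submodule ℝ H, totalErr F' V = ∑ i ∈ s, Metric.infDist (F i) (V : Set H) ^ 2 := by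
    intro V
    rw [totalErr, ← Finset.sum_coe_sort s (fun i => Metric.infDist (F i) (V : Set H) ^ 2)]
    exact Fintype.sum_equiv (s.orderIsoOfFin hk.symm).toEquiv _ _ (fun t => rfl)
  obtain ⟨V0, hV0, hmin⟩ := hMAP k F'
  exact ⟨V0, hV0, fun V hV => by rw [← key, ← key]; exact hmin V hV⟩

/-- Existence of an optimal bundle for the non-linear least squares problem. -/
theorem exists_optimal_bundle
    {H : Type*} [NormedAddCommGroup H] [InnerProductSpace ℝ H] [CompleteSpace H]
    (C : Set (Submodule ℝ H)) (hC : ∀ V ∈ C, IsClosed (V : Set H))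
    (hbot : (⊥ : Submodule ℝ H) ∈ C) (hMAP : HasMAP C)
    {m l : ℕ} (F : Fin m → H) (hl : 1 ≤ l) :
    ∃ V0 : Fin l → Submodule ℝ H, (∀ j, V0 j ∈ C) ∧
      ∀ V : Fin l → Submodule ℝ H, (∀ j, V j ∈ C) → eBundle F V0 ≤ eBundle F V := by
  haveI : NeZero l := ⟨Nat.one_le_iff_ne_zero.mp hl⟩
  -- for each labeling c, choose best bundle Vsel c
  have hsel : ∀ c : Fin m → Fin l, ∃ W : Fin l → Submodule ℝ H,
      (∀ j, W j ∈ C) ∧ ∀ j, ∀ V ∈ C,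
        ∑ i ∈ Finset.univ.filter (fun i => c i = j), Metric.infDist (F i) (W j : Set H) ^ 2 ≤
          ∑ i ∈ Finset.univ.filter (fun i => c i = j), Metric.infDist (F i) (V : Set H) ^ 2 := by
    intro c
    have h := fun j => hasMAP_finset hMAP F (Finset.univ.filter (fun i => c i = j))
    choose W hW hWmin using h
    exact ⟨W, hW, hWmin⟩
  choose Vsel hVselC hVselMin using hsel
  -- choose c0 minimizing Gamma F c (Vsel c)
  obtain ⟨c0, -, hc0⟩ := Finset.exists_min_image (Finset.univ : Finset (Fin m → Fin l))
    (fun c => Gamma F c (Vsel c)) ⟨fun _ => 0, Finset.mem_univ _⟩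
  refine ⟨Vsel c0, hVselC c0, fun V hV => ?_⟩
  -- eBundle F (Vsel c0) ≤ Gamma F c0 (Vsel c0)
  have h1 : eBundle F (Vsel c0) ≤ Gamma F c0 (Vsel c0) := by
    apply Finset.sum_le_sum
    intro i _
    exact ciInf_le (Set.Finite.bddBelow (Set.finite_range _)) (c0 i)
  -- choose labeling for V
  have hargmin : ∀ i : Fin m, ∃ j : Fin l, ∀ j', Metric.infDist (F i) (V j : Set H) ^ 2 ≤
      Metric.infDist (F i) (V j' : Set H) ^ 2 := by
    intro i
    obtain ⟨j, -, hj⟩ := Finset.exists_min_image (Finset.univ : Finset (Fin l))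
      (fun j => Metric.infDist (F i) (V j : Set H) ^ 2) ⟨0, Finset.mem_univ _⟩
    exact ⟨j, fun j' => hj j' (Finset.mem_univ _)⟩
  choose c hc using hargmin
  have h2 : Gamma F c V ≤ eBundle F V := by
    apply Finset.sum_le_sum
    intro i _
    exact le_ciInf (hc i)
  have h3 : Gamma F c (Vsel c) ≤ Gamma F c V := by
    unfold Gamma
    rw [← Finset.sum_fiberwise Finset.univ c
      (fun i => Metric.infDist (F i) (Vsel c (c i) : Set H) ^ 2),
      ← Finset.sum_fiberwise Finset.univ c
      (fun i => Metric.infDist (F i) (V (c i) : Set H) ^ 2)]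
    apply Finset.sum_le_sum
    intro j _
    calc ∑ i ∈ Finset.univ.filter (fun i => c i = j),
          Metric.infDist (F i) (Vsel c (c i) : Set H) ^ 2
        = ∑ i ∈ Finset.univ.filter (fun i => c i = j),
          Metric.infDist (F i) (Vsel c j : Set H) ^ 2 := by
          apply Finset.sum_congr rfl
          intro i hi
          rw [(Finset.mem_filter.mp hi).2]
      _ ≤ ∑ i ∈ Finset.univ.filter (fun i => c i = j),
          Metric.infDist (F i) (V j : Set H) ^ 2 := hVselMin c j (V j) (hV j)
      _ = ∑ i ∈ Finset.univ.filter (fun i => c i = j),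
          Metric.infDist (F i) (V (c i) : Set H) ^ 2 := by
          apply Finset.sum_congr rfl
          intro i hi
          rw [(Finset.mem_filter.mp hi).2]
  have h4 : Gamma F c0 (Vsel c0) ≤ Gamma F c (Vsel c) := hc0 c (Finset.mem_univ _)
  linarith
end

section
/- Let H be a real Hilbert space, let C be a family of closed subspaces of H containing the zero subspace that has the Minimal Approximation Property, let F = (f_1, …, f_m) be a finite family of vectors in H, and let l ≥ 1. If (c_0, V_0) is a Γ-minimal pair, then every bundle V' ∈ W(c_0) is a solution of the minimization problem: e(F, V') ≤ e(F, V) for every bundle V with components in C. -/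
open Metric Finset

lemma gamma_eq_sum_fibers {H : Type*} [NormedAddCommGroup H] [InnerProductSpace ℝ H]
    {m l : ℕ} (F : Fin m → H) (c : Fin m → Fin l) (V : Fin l → Submodule ℝ H) :
    Gamma F c V = ∑ j, ∑ i ∈ Finset.univ.filter (fun i => c i = j),
      Metric.infDist (F i) (V j : Set H) ^ 2 := by
  unfold Gamma
  rw [← Finset.sum_fiberwise_of_maps_to (g := c) (fun i _ => Finset.mem_univ (c i))]
  refine Finset.sum_congr rfl fun j _ => Finset.sum_congr rfl fun i hi => ?_
  rw [Finset.mem_filter] at hi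
  rw [hi.2]

lemma exists_best_bundle {H : Type*} [NormedAddCommGroup H] [InnerProductSpace ℝ H]
    (C : Set (Submodule ℝ H)) (hMAP : HasMAP C)
    {m l : ℕ} (F : Fin m → H) (c : Fin m → Fin l) :
    ∃ W : Fin l → Submodule ℝ H, IsBestBundle C F c W := by
  have key : ∀ j : Fin l, ∃ Wj ∈ C, ∀ U ∈ C,
      ∑ i ∈ Finset.univ.filter (fun i => c i = j), Metric.infDist (F i) (Wj : Set H) ^ 2 ≤
        ∑ i ∈ Finset.univ.filter (fun i => c i = j), Metric.infDist (F i) (U : Set H) ^ 2 := by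
    intro j
    obtain ⟨Wj, hWjC, hWj⟩ := hMAP m (fun i => if c i = j then F i else 0)
    have eq1 : ∀ Z : Submodule ℝ H,
        totalErr (fun i => if c i = j then F i else 0) Z
          = ∑ i ∈ Finset.univ.filter (fun i => c i = j),
              Metric.infDist (F i) (Z : Set H) ^ 2 := by
      intro Z
      unfold totalErr
      rw [← Finset.sum_filter_add_sum_filter_not Finset.univ (fun i => c i = j)]
      have h0 : ∑ i ∈ Finset.univ.filter (fun i => ¬ c i = j),
          Metric.infDist (if c i = j then F i else 0) (Z : Set H) ^ 2 = 0 := by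
        refine Finset.sum_eq_zero fun i hi => ?_
        rw [Finset.mem_filter] at hi
        simp [hi.2, Metric.infDist_zero_of_mem Z.zero_mem]
      rw [h0, add_zero]
      refine Finset.sum_congr rfl fun i hi => ?_
      rw [Finset.mem_filter] at hi
      simp [hi.2]
    refine ⟨Wj, hWjC, fun U hU => ?_⟩
    rw [← eq1, ← eq1]
    exact hWj U hU
  choose W hWC hWmin using key
  exact ⟨W, hWC, hWmin⟩

/-- If `(c₀, V₀)` is a `Γ`-minimal pair, then every best bundle for `c₀` solves the
minimization problem. -/
theorem isBestBundle_solves_of_isGammaMinimal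
    {H : Type*} [NormedAddCommGroup H] [InnerProductSpace ℝ H] [CompleteSpace H]
    (C : Set (Submodule ℝ H)) (hC : ∀ V ∈ C, IsClosed (V : Set H))
    (hbot : (⊥ : Submodule ℝ H) ∈ C) (hMAP : HasMAP C)
    {m l : ℕ} (F : Fin m → H) (hl : 1 ≤ l)
    (c0 : Fin m → Fin l) (V0 : Fin l → Submodule ℝ H)
    (hmin : IsGammaMinimal C F c0 V0)
    (V' : Fin l → Submodule ℝ H) (hV' : IsBestBundle C F c0 V') :
    ∀ V : Fin l → Submodule ℝ H, (∀ j, V j ∈ C) → eBundle F V' ≤ eBundle F V := by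
  intro V hVC
  have : Nonempty (Fin l) := ⟨⟨0, hl⟩⟩
  obtain ⟨hV'C, hV'min⟩ := hV'
  obtain ⟨⟨hV0C, hV0min⟩, hGmin⟩ := hmin
  have hbdd : ∀ (i : Fin m) (U : Fin l → Submodule ℝ H),
      BddBelow (Set.range fun j => Metric.infDist (F i) (U j : Set H) ^ 2) :=
    fun i U => ⟨0, fun x hx => by obtain ⟨j, rfl⟩ := hx; positivity⟩
  -- Step 1 : eBundle F V' ≤ Gamma F c0 V'
  have h1 : eBundle F V' ≤ Gamma F c0 V' :=
    Finset.sum_le_sum fun i _ => ciInf_le (hbdd i V') (c0 i)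
  -- Step 2 : Gamma F c0 V' ≤ Gamma F c0 V0
  have h2 : Gamma F c0 V' ≤ Gamma F c0 V0 := by
    rw [gamma_eq_sum_fibers, gamma_eq_sum_fibers]
    exact Finset.sum_le_sum fun j _ => hV'min j (V0 j) (hV0C j)
  -- choose argmin labeling for V
  have hmin' : ∀ i : Fin m, ∃ ji : Fin l, ∀ j : Fin l,
      Metric.infDist (F i) (V ji : Set H) ^ 2 ≤ Metric.infDist (F i) (V j : Set H) ^ 2 := by
    intro i
    obtain ⟨j, -, hj⟩ := Finset.exists_min_image Finset.univ
      (fun j => Metric.infDist (F i) (V j : Set H) ^ 2) ⟨⟨0, hl⟩, Finset.mem_univ _⟩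
    exact ⟨j, fun j' => hj j' (Finset.mem_univ _)⟩
  choose c hc using hmin'
  -- Gamma F c V = eBundle F V
  have heq : Gamma F c V = eBundle F V := by
    refine Finset.sum_congr rfl fun i _ => ?_
    exact (le_antisymm (ciInf_le (hbdd i V) (c i)) (le_ciInf (hc i))).symm
  -- best bundle for c
  obtain ⟨W, hW⟩ := exists_best_bundle C hMAP F c
  have h3 : Gamma F c0 V0 ≤ Gamma F c W := hGmin c W hW
  have h4 : Gamma F c W ≤ Gamma F c V := by
    rw [gamma_eq_sum_fibers, gamma_eq_sum_fibers]
    exact Finset.sum_le_sum fun j _ => hW.2 j (V j) (hVC j)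
  calc eBundle F V' ≤ Gamma F c0 V' := h1
    _ ≤ Gamma F c0 V0 := h2
    _ ≤ Gamma F c W := h3
    _ ≤ Gamma F c V := h4
    _ = eBundle F V := heq
end

section
/- Let H be a real Hilbert space, let C be a family of closed subspaces of H containing the zero subspace that has the Minimal Approximation Property, let F = (f_1, …, f_m) be a finite family of vectors in H, and let l ≥ 1. If V_0 is a bundle with components in C satisfying e(F, V_0) ≤ e(F, V) for every bundle V with components in C, then there exists a labeling c_0 such that V_0 ∈ W(c_0) and the pair (c_0, V_0) is Γ-minimal. -/
open Metric Finset

/-- Every solution of the minimization problem arises from a `Γ`-minimal pair. -/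
theorem exists_isGammaMinimal_of_optimal
    {H : Type*} [NormedAddCommGroup H] [InnerProductSpace ℝ H] [CompleteSpace H]
    (C : Set (Submodule ℝ H)) (hC : ∀ V ∈ C, IsClosed (V : Set H))
    (hbot : (⊥ : Submodule ℝ H) ∈ C) (hMAP : HasMAP C)
    {m l : ℕ} (F : Fin m → H) (hl : 1 ≤ l)
    (V0 : Fin l → Submodule ℝ H) (hV0 : ∀ j, V0 j ∈ C)
    (hopt : ∀ V : Fin l → Submodule ℝ H, (∀ j, V j ∈ C) → eBundle F V0 ≤ eBundle F V) :
    ∃ c0 : Fin m → Fin l, IsBestBundle C F c0 V0 ∧ IsGammaMinimal C F c0 V0 := by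
  haveI : Nonempty (Fin l) := ⟨⟨0, hl⟩⟩
  have hbdd : ∀ (i : Fin m) (V : Fin l → Submodule ℝ H),
      BddBelow (Set.range fun j => Metric.infDist (F i) (V j : Set H) ^ 2) :=
    fun i V => Finite.bddBelow_range _
  have key : ∀ (c : Fin m → Fin l) (V : Fin l → Submodule ℝ H),
      eBundle F V ≤ Gamma F c V := by
    intro c V
    apply Finset.sum_le_sum
    intro i _
    exact ciInf_le (hbdd i V) (c i)
  choose c0 hc0 using fun i =>
    exists_eq_ciInf_of_finite (f := fun j => Metric.infDist (F i) (V0 j : Set H) ^ 2)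
  have hEq : Gamma F c0 V0 = eBundle F V0 := Finset.sum_congr rfl fun i _ => hc0 i
  have hbest : IsBestBundle C F c0 V0 := by
    refine ⟨hV0, ?_⟩
    intro j W hW
    by_contra h
    push_neg at h
    set V' := Function.update V0 j W with hV'
    have hV'mem : ∀ k, V' k ∈ C := by
      intro k
      by_cases hk : k = j
      · subst hk; simpa [hV'] using hW
      · simpa [hV', Function.update_of_ne hk] using hV0 k
    have h1 : eBundle F V0 ≤ eBundle F V' := hopt V' hV'mem
    have h2 : eBundle F V' ≤ Gamma F c0 V' := key c0 V'
    have h3 : Gamma F c0 V' < Gamma F c0 V0 := by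
      unfold Gamma
      rw [← Finset.sum_filter_add_sum_filter_not Finset.univ (fun i => c0 i = j)
          (fun i => Metric.infDist (F i) (V' (c0 i) : Set H) ^ 2),
          ← Finset.sum_filter_add_sum_filter_not Finset.univ (fun i => c0 i = j)
          (fun i => Metric.infDist (F i) (V0 (c0 i) : Set H) ^ 2)]
      apply add_lt_add_of_lt_of_le
      · have e1 : ∑ i ∈ Finset.univ.filter (fun i => c0 i = j),
            Metric.infDist (F i) (V' (c0 i) : Set H) ^ 2 =
            ∑ i ∈ Finset.univ.filter (fun i => c0 i = j),
            Metric.infDist (F i) (W : Set H) ^ 2 := by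
          apply Finset.sum_congr rfl
          intro i hi
          simp only [Finset.mem_filter] at hi
          rw [hi.2]
          simp [hV']
        have e2 : ∑ i ∈ Finset.univ.filter (fun i => c0 i = j),
            Metric.infDist (F i) (V0 (c0 i) : Set H) ^ 2 =
            ∑ i ∈ Finset.univ.filter (fun i => c0 i = j),
            Metric.infDist (F i) (V0 j : Set H) ^ 2 := by
          apply Finset.sum_congr rfl
          intro i hi
          simp only [Finset.mem_filter] at hi
          rw [hi.2]
        rw [e1, e2]
        exact h
      · apply Finset.sum_le_sum
        intro i hi
        simp only [Finset.mem_filter, Finset.mem_univ, true_and] at hi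
        rw [hV', Function.update_of_ne hi]
    linarith [hEq]
  refine ⟨c0, hbest, hbest, ?_⟩
  intro c V hV
  calc Gamma F c0 V0 = eBundle F V0 := hEq
    _ ≤ eBundle F V := hopt V hV.1
    _ ≤ Gamma F c V := key c V
end

section
/- Let H be a real Hilbert space, let C be a family of closed subspaces of H containing the zero subspace that has the Minimal Approximation Property, let F = (f_1, …, f_m) be a finite family of vectors in H, and let l ≥ 1. Let c be a labeling and V ∈ W(c) a best bundle for c with Γ(c, V) > e(F, V). Let c' ∈ Ω(V) be a best partition for V and let V' ∈ W(c'). Then Γ(c', V') ≤ e(F, V) < Γ(c, V); in particular the value of Γ strictly decreases after one iteration of the alternating minimization. -/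
open Metric Finset

/-- `c ∈ Ω(V)`: the labeling `c` is a best partition for the bundle `V`. -/
def IsBestPartition {H : Type*} [NormedAddCommGroup H] [InnerProductSpace ℝ H]
    {m l : ℕ} (F : Fin m → H) (V : Fin l → Submodule ℝ H) (c : Fin m → Fin l) : Prop :=
  ∀ (i : Fin m) (h : Fin l),
    Metric.infDist (F i) (V (c i) : Set H) ≤ Metric.infDist (F i) (V h : Set H)

/-- One step of the alternating minimization strictly decreases `Γ` when the
current pair is not yet consistent. -/
theorem Gamma_strict_decrease
    {H : Type*} [NormedAddCommGroup H] [InnerProductSpace ℝ H] [CompleteSpace H]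
    (C : Set (Submodule ℝ H)) (hC : ∀ V ∈ C, IsClosed (V : Set H))
    (hbot : (⊥ : Submodule ℝ H) ∈ C) (hMAP : HasMAP C)
    {m l : ℕ} (F : Fin m → H) (hl : 1 ≤ l)
    (c : Fin m → Fin l) (V : Fin l → Submodule ℝ H) (hV : IsBestBundle C F c V)
    (hgt : eBundle F V < Gamma F c V)
    (c' : Fin m → Fin l) (hc' : IsBestPartition F V c')
    (V' : Fin l → Submodule ℝ H) (hV' : IsBestBundle C F c' V') :
    Gamma F c' V' ≤ eBundle F V ∧ eBundle F V < Gamma F c V := by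
  have hne : Nonempty (Fin l) := ⟨⟨0, hl⟩⟩
  have key : eBundle F V = Gamma F c' V := by
    unfold Gamma eBundle
    refine Finset.sum_congr rfl fun i _ => ?_
    apply le_antisymm
    · exact ciInf_le (Set.Finite.bddBelow (Set.finite_range _)) (c' i)
    · exact le_ciInf fun j => pow_le_pow_left₀ Metric.infDist_nonneg (hc' i j) 2
  refine ⟨?_, hgt⟩
  rw [key]
  unfold Gamma
  rw [← Finset.sum_fiberwise Finset.univ c'
    (fun i => Metric.infDist (F i) ((V' (c' i)) : Set H) ^ 2),
    ← Finset.sum_fiberwise Finset.univ c'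
    (fun i => Metric.infDist (F i) ((V (c' i)) : Set H) ^ 2)]
  refine Finset.sum_le_sum fun j _ => ?_
  have h1 : ∀ i ∈ Finset.univ.filter (fun i => c' i = j),
      Metric.infDist (F i) ((V' (c' i)) : Set H) ^ 2
        = Metric.infDist (F i) ((V' j) : Set H) ^ 2 := by
    intro i hi; rw [(Finset.mem_filter.mp hi).2]
  have h2 : ∀ i ∈ Finset.univ.filter (fun i => c' i = j),
      Metric.infDist (F i) ((V (c' i)) : Set H) ^ 2
        = Metric.infDist (F i) ((V j) : Set H) ^ 2 := by
    intro i hi; rw [(Finset.mem_filter.mp hi).2]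
  rw [Finset.sum_congr rfl h1, Finset.sum_congr rfl h2]
  exact hV'.2 j (V j) (hV.1 j)
end

section
/- Let H be a real Hilbert space, let C be a family of closed subspaces of H containing the zero subspace that has the Minimal Approximation Property, let F = (f_1, …, f_m) be a finite family of vectors in H, and let l ≥ 1. Let CW be a function assigning to each labeling c a bundle CW(c) ∈ W(c), and let CP be a function assigning to each bundle V a labeling CP(V) ∈ Ω(V). Given any initial labeling c_1, define recursively V_j = CW(c_j) and c_{j+1} = CP(V_j). Then the algorithm terminates in finitely many steps: there exists an index j with 1 ≤ j ≤ l^m such that Γ(c_j, V_j) = e(F, V_j). -/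
open Metric Finset

/-- The alternating search algorithm terminates in at most `l ^ m` steps. -/
theorem algorithm_terminates
    {H : Type*} [NormedAddCommGroup H] [InnerProductSpace ℝ H] [CompleteSpace H]
    (C : Set (Submodule ℝ H)) (hC : ∀ V ∈ C, IsClosed (V : Set H))
    (hbot : (⊥ : Submodule ℝ H) ∈ C) (hMAP : HasMAP C)
    {m l : ℕ} (F : Fin m → H) (hl : 1 ≤ l)
    (CW : (Fin m → Fin l) → Fin l → Submodule ℝ H)
    (hCW : ∀ c, IsBestBundle C F c (CW c))
    (CP : (Fin l → Submodule ℝ H) → Fin m → Fin l)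
    (hCP : ∀ V, IsBestPartition F V (CP V))
    (c : ℕ → Fin m → Fin l) (V : ℕ → Fin l → Submodule ℝ H)
    (hV : ∀ j, 1 ≤ j → V j = CW (c j))
    (hc : ∀ j, 1 ≤ j → c (j + 1) = CP (V j)) :
    ∃ j, 1 ≤ j ∧ j ≤ l ^ m ∧ Gamma F (c j) (V j) = eBundle F (V j) := by
  haveI : Nonempty (Fin l) := ⟨⟨0, hl⟩⟩
  -- A: eBundle ≤ Gamma always
  have hA : ∀ (c' : Fin m → Fin l) (V' : Fin l → Submodule ℝ H),
      eBundle F V' ≤ Gamma F c' V' := by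
    intro c' V'
    apply Finset.sum_le_sum
    intro i _
    exact ciInf_le (Finite.bddBelow_range _) (c' i)
  -- B: best partition achieves eBundle
  have hB : ∀ (V' : Fin l → Submodule ℝ H), Gamma F (CP V') V' = eBundle F V' := by
    intro V'
    apply Finset.sum_congr rfl
    intro i _
    refine le_antisymm (le_ciInf fun h => ?_) (ciInf_le (Finite.bddBelow_range _) _)
    exact pow_le_pow_left₀ Metric.infDist_nonneg (hCP V' i h) 2
  -- C: best bundle minimizes Gamma over bundles in C
  have hC3 : ∀ (c' : Fin m → Fin l) (V' : Fin l → Submodule ℝ H),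
      (∀ j, V' j ∈ C) → Gamma F c' (CW c') ≤ Gamma F c' V' := by
    intro c' V' hV'
    have key : ∀ (W : Fin l → Submodule ℝ H), Gamma F c' W =
        ∑ j, ∑ i ∈ Finset.univ.filter (fun i => c' i = j),
          Metric.infDist (F i) (W j : Set H) ^ 2 := by
      intro W
      rw [Gamma, ← Finset.sum_fiberwise Finset.univ c'
        (fun i => Metric.infDist (F i) (W (c' i) : Set H) ^ 2)]
      apply Finset.sum_congr rfl; intro j _
      apply Finset.sum_congr rfl; intro i hi
      simp only [Finset.mem_filter] at hi
      rw [hi.2]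
    rw [key, key]
    apply Finset.sum_le_sum
    intro j _
    exact (hCW c').2 j (V' j) (hV' j)
  by_contra hcon
  push_neg at hcon
  have hdec : ∀ j, 1 ≤ j → j ≤ l ^ m →
      Gamma F (c (j+1)) (V (j+1)) < Gamma F (c j) (V j) := by
    intro j h1 h2
    have hVe : eBundle F (V j) < Gamma F (c j) (V j) :=
      lt_of_le_of_ne (hA _ _) (Ne.symm (hcon j h1 h2))
    have e1 : Gamma F (c (j+1)) (V j) = eBundle F (V j) := by
      rw [hc j h1]; exact hB (V j)
    have e2 : Gamma F (c (j+1)) (V (j+1)) ≤ Gamma F (c (j+1)) (V j) := by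
      rw [hV (j+1) (by omega)]
      apply hC3
      intro j'
      rw [hV j h1]; exact (hCW (c j)).1 j'
    calc Gamma F (c (j+1)) (V (j+1)) ≤ eBundle F (V j) := e2.trans_eq e1
      _ < Gamma F (c j) (V j) := hVe
  have hchain : ∀ b a, 1 ≤ a → a < b → b ≤ l ^ m + 1 →
      Gamma F (c b) (V b) < Gamma F (c a) (V a) := by
    intro b
    induction b with
    | zero => omega
    | succ b ih =>
      intro a h1 hab hb
      rcases Nat.lt_or_ge a b with hlt | hge
      · exact (hdec b (by omega) (by omega)).trans (ih a h1 hlt (by omega))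
      · have : a = b := by omega
        subst this
        exact hdec a h1 (by omega)
  have hcard : Fintype.card (Fin m → Fin l) < Fintype.card (Fin (l ^ m + 1)) := by
    simp [Fintype.card_fun]
  obtain ⟨a, b, hne, heq⟩ := Fintype.exists_ne_map_eq_of_card_lt
    (fun k : Fin (l ^ m + 1) => c (↑k + 1)) hcard
  have final : ∀ (a b : Fin (l ^ m + 1)), a < b → c (↑a + 1) = c (↑b + 1) → False := by
    intro a b hab heq
    have hab' : (a : ℕ) < (b : ℕ) := hab
    have hbl : (b : ℕ) < l ^ m + 1 := b.isLt
    have h1 : Gamma F (c (↑b+1)) (V (↑b+1)) < Gamma F (c (↑a+1)) (V (↑a+1)) :=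
      hchain _ _ (by omega) (by omega) (by omega)
    have h2 : V ((a : ℕ)+1) = V ((b : ℕ)+1) := by
      rw [hV _ (by omega), hV _ (by omega), heq]
    rw [heq, h2] at h1
    exact lt_irrefl _ h1
  rcases Ne.lt_or_gt hne with hab | hab
  · exact final a b hab heq
  · exact final b a hab heq.symm
end

section
/- Let f_1, …, f_m be vectors in ℝ^N, let G be the m×m Gram matrix with entries G_{ij} = ⟨f_i, f_j⟩, and let λ_1 ≥ λ_2 ≥ … ≥ λ_m ≥ 0 be the eigenvalues of G counted with multiplicity. Suppose 1 ≤ n < m and λ_n > λ_{n+1}. Then the optimal subspace of dimension at most n is unique: if V and V' are linear subspaces of ℝ^N with dim V ≤ n and dim V' ≤ n that both minimize Σ_{i=1}^m dist(f_i, ·)² over all subspaces of dimension at most n, then V = V'. -/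
open Metric Finset Polynomial


section EYhelpers

variable {E : Type*} [NormedAddCommGroup E] [InnerProductSpace ℝ E]


lemma ey_infDist (U : Submodule ℝ E) [U.HasOrthogonalProjection] (x : E) :
    Metric.infDist x (U : Set E) = ‖x - U.orthogonalProjectionOnto x‖ := by
  rw [Metric.infDist_eq_iInf, Submodule.coe_orthogonalProjectionOnto_apply, Submodule.starProjection_minimal]
  simp_rw [dist_eq_norm]
  rfl

lemma ey_pyth (U : Submodule ℝ E) [U.HasOrthogonalProjection] (x : E) :
    ‖x - U.orthogonalProjectionOnto x‖ ^ 2 = ‖x‖ ^ 2 - ‖(U.orthogonalProjectionOnto x : E)‖ ^ 2 := by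
  have h : (inner ℝ ((U.orthogonalProjectionOnto x : E)) (x - U.orthogonalProjectionOnto x) : ℝ) = 0 := by
    rw [real_inner_comm]
    exact Submodule.starProjection_inner_eq_zero x _ (Submodule.coe_mem _)
  have h2 : ‖(U.orthogonalProjectionOnto x : E) + (x - U.orthogonalProjectionOnto x)‖ ^ 2
      = ‖(U.orthogonalProjectionOnto x : E)‖ ^ 2 + ‖x - U.orthogonalProjectionOnto x‖ ^ 2 := by
    rw [norm_add_sq_real, h]; ring
  rw [add_sub_cancel] at h2
  linarith

lemma ey_proj_normsq {ι : Type*} [Fintype ι] (U : Submodule ℝ E) [CompleteSpace U]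
    (b : OrthonormalBasis ι ℝ U) (x : E) :
    ‖(U.orthogonalProjectionOnto x : E)‖ ^ 2 = ∑ j, (inner ℝ ((b j : E)) x : ℝ) ^ 2 := by
  have ha : Orthonormal ℝ (fun j => (b j : E)) := b.orthonormal.comp_linearIsometry U.subtypeₗᵢ
  have hPx : (U.orthogonalProjectionOnto x : E)
      = ∑ j, (inner ℝ ((b j : E)) x : ℝ) • (b j : E) := by
    rw [b.orthogonalProjectionOnto_apply_eq_sum]
    push_cast
    rfl
  rw [hPx, ← real_inner_self_eq_norm_sq, ha.inner_sum]
  simp [sq]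

lemma ey_parseval {ι : Type*} [Fintype ι] (v : OrthonormalBasis ι ℝ E) (x : E) :
    ∑ k, (inner ℝ (v k) x : ℝ) ^ 2 = ‖x‖ ^ 2 := by
  have h := v.sum_inner_mul_inner x x
  simp_rw [← real_inner_self_eq_norm_sq, ← h, real_inner_comm x]
  simp [sq]

lemma ey_value {m : ℕ} (f : Fin m → E) (U : Submodule ℝ E) [CompleteSpace U]
    {ι : Type*} [Fintype ι] (b : OrthonormalBasis ι ℝ U) :
    ∑ i, Metric.infDist (f i) (U : Set E) ^ 2
      = ∑ i, ‖f i‖ ^ 2 - ∑ j, ∑ i, (inner ℝ (f i) ((b j : E)) : ℝ) ^ 2 := by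
  have h : ∀ i, Metric.infDist (f i) (U : Set E) ^ 2
      = ‖f i‖ ^ 2 - ∑ j, (inner ℝ ((b j : E)) (f i) : ℝ) ^ 2 := by
    intro i
    rw [ey_infDist, ey_pyth, ey_proj_normsq U b]
  simp_rw [h, Finset.sum_sub_distrib]
  congr 1
  rw [Finset.sum_comm]
  exact Finset.sum_congr rfl fun j _ => Finset.sum_congr rfl fun i _ => by
    rw [real_inner_comm]

lemma ey_mem_of_proj_normsq (U : Submodule ℝ E) [U.HasOrthogonalProjection] (x : E)
    (h : ‖(U.orthogonalProjectionOnto x : E)‖ ^ 2 = ‖x‖ ^ 2) : x ∈ U := by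
  have h2 := ey_pyth U x
  rw [h, sub_self, pow_eq_zero_iff (by norm_num), norm_eq_zero, sub_eq_zero] at h2
  rw [h2]
  exact Submodule.coe_mem _

lemma ey_kyfan {m N n : ℕ} (f : Fin m → E) (v : OrthonormalBasis (Fin N) ℝ E) (μ : Fin N → ℝ)
    (hg : ∀ x : E, ∑ i, (inner ℝ (f i) x : ℝ) ^ 2 = ∑ k, μ k * (inner ℝ (v k) x : ℝ) ^ 2)
    (c : ℝ) (hc : 0 ≤ c) (K : Finset (Fin N))
    (hKc : ∀ k ∈ K, c < μ k) (hKc' : ∀ k ∉ K, μ k ≤ c) (hKn : K.card = n)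
    [FiniteDimensional ℝ E]
    (U : Submodule ℝ E) (hU : Module.finrank ℝ U ≤ n) :
    (∑ i, ‖f i‖ ^ 2 - ∑ k ∈ K, μ k) ≤ ∑ i, Metric.infDist (f i) (U : Set E) ^ 2 ∧
    ((∑ i, Metric.infDist (f i) (U : Set E) ^ 2 = ∑ i, ‖f i‖ ^ 2 - ∑ k ∈ K, μ k) →
      ∀ k ∈ K, v k ∈ U) := by
  classical
  set b := stdOrthonormalBasis ℝ U with hb
  set t : Fin N → ℝ := fun k => ∑ j, (inner ℝ (v k) ((b j : E)) : ℝ) ^ 2 with ht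
  have ha : Orthonormal ℝ (fun j => (b j : E)) := b.orthonormal.comp_linearIsometry U.subtypeₗᵢ
  have htproj : ∀ k, t k = ‖(U.orthogonalProjectionOnto (v k) : E)‖ ^ 2 := by
    intro k
    rw [ey_proj_normsq U b]
    exact Finset.sum_congr rfl fun j _ => by rw [real_inner_comm]
  have ht0 : ∀ k, 0 ≤ t k := fun k => Finset.sum_nonneg fun j _ => sq_nonneg _
  have ht1 : ∀ k, t k ≤ 1 := by
    intro k
    have hb1 := ha.sum_inner_products_le (v k) (s := Finset.univ)
    rw [orthonormal_iff_ite] at ha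
    calc t k = ∑ j, ‖(inner ℝ ((b j : E)) (v k) : ℝ)‖ ^ 2 := by
          exact Finset.sum_congr rfl fun j _ => by
            rw [real_inner_comm, Real.norm_eq_abs, sq_abs]
      _ ≤ ‖v k‖ ^ 2 := hb1
      _ = 1 := by rw [v.orthonormal.1 k]; norm_num
  have htsum : ∑ k, t k = Module.finrank ℝ U := by
    rw [ht]
    rw [Finset.sum_comm]
    have : ∀ j, ∑ k, (inner ℝ (v k) ((b j : E)) : ℝ) ^ 2 = 1 := by
      intro j
      rw [ey_parseval v]
      have : ‖(b j : E)‖ = 1 := by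
        rw [Submodule.norm_coe]; exact b.orthonormal.1 j
      rw [this]; norm_num
    calc ∑ j : Fin (Module.finrank ℝ U), ∑ k, (inner ℝ (v k) ((b j : E)) : ℝ) ^ 2
        = ∑ j : Fin (Module.finrank ℝ U), (1:ℝ) := Finset.sum_congr rfl fun j _ => this j
      _ = Module.finrank ℝ U := by simp
  -- the quantity Σ_k μ k * t k equals Σ_j Σ_i ⟪f i, b j⟫²
  have hswap : ∑ j, ∑ i, (inner ℝ (f i) ((b j : E)) : ℝ) ^ 2 = ∑ k, μ k * t k := by
    simp_rw [hg, ht, Finset.mul_sum]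
    rw [Finset.sum_comm]
  have hval := ey_value f U b
  rw [hswap] at hval
  -- key algebraic identity
  have hsplit1 := Finset.sum_add_sum_compl K (fun k => μ k * t k)
  have hsplit2 := Finset.sum_add_sum_compl K t
  have eA : ∑ k ∈ K, (μ k - c) * (1 - t k)
      = ∑ k ∈ K, μ k - c * n - ∑ k ∈ K, μ k * t k + c * ∑ k ∈ K, t k := by
    have : ∀ k ∈ K, (μ k - c) * (1 - t k) = μ k - c - μ k * t k + c * t k :=
      fun k _ => by ring
    rw [Finset.sum_congr rfl this]
    simp only [Finset.sum_add_distrib, Finset.sum_sub_distrib, Finset.mul_sum,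
      Finset.sum_const, hKn, nsmul_eq_mul]
    ring
  have eB : ∑ k ∈ Kᶜ, (c - μ k) * t k = c * ∑ k ∈ Kᶜ, t k - ∑ k ∈ Kᶜ, μ k * t k := by
    have : ∀ k ∈ Kᶜ, (c - μ k) * t k = c * t k - μ k * t k := fun k _ => by ring
    rw [Finset.sum_congr rfl this]
    simp only [Finset.sum_sub_distrib, Finset.mul_sum]
  have hA0 : 0 ≤ ∑ k ∈ K, (μ k - c) * (1 - t k) :=
    Finset.sum_nonneg fun k hk =>
      mul_nonneg (by linarith [hKc k hk]) (by linarith [ht1 k])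
  have hB0 : 0 ≤ ∑ k ∈ Kᶜ, (c - μ k) * t k :=
    Finset.sum_nonneg fun k hk =>
      mul_nonneg (by linarith [hKc' k (Finset.mem_compl.mp hk)]) (ht0 k)
  have hD0 : 0 ≤ c * ((n : ℝ) - ∑ k, t k) := by
    apply mul_nonneg hc
    have : (∑ k, t k) ≤ n := by rw [htsum]; exact_mod_cast hU
    linarith
  have hident : ∑ k ∈ K, μ k - ∑ k, μ k * t k
      = ∑ k ∈ K, (μ k - c) * (1 - t k) + ∑ k ∈ Kᶜ, (c - μ k) * t k
        + c * ((n : ℝ) - ∑ k, t k) := by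
    rw [eA, eB, ← hsplit1, ← hsplit2]
    ring
  have hineq : ∑ k, μ k * t k ≤ ∑ k ∈ K, μ k := by linarith
  constructor
  · rw [hval]; linarith
  · intro heq k hk
    rw [hval] at heq
    have hz : ∑ k ∈ K, μ k - ∑ k, μ k * t k = 0 := by linarith
    have hA : ∑ k ∈ K, (μ k - c) * (1 - t k) = 0 := by linarith
    have hterm := (Finset.sum_eq_zero_iff_of_nonneg
      (fun k hk => mul_nonneg (by linarith [hKc k hk]) (by linarith [ht1 k]))).mp hA k hk
    have htk1 : t k = 1 := by
      rcases mul_eq_zero.mp hterm with h | h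
      · exact absurd h (by linarith [hKc k hk])
      · linarith
    apply ey_mem_of_proj_normsq U (v k)
    rw [← htproj k, htk1]
    have : ‖v k‖ = 1 := v.orthonormal.1 k
    rw [this]; norm_num

end EYhelpers


lemma ey_sum_rot {α β γ : Type*} [Fintype α] [Fintype β] [Fintype γ] (g : α → β → γ → ℝ) :
    ∑ a, ∑ b, ∑ i, g a b i = ∑ i, ∑ a, ∑ b, g a b i := by
  calc ∑ a, ∑ b, ∑ i, g a b i = ∑ a, ∑ i, ∑ b, g a b i :=
        Finset.sum_congr rfl fun a _ => by rw [Finset.sum_comm]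
    _ = ∑ i, ∑ a, ∑ b, g a b i := by rw [Finset.sum_comm]

lemma ey_inner_eq (x y : EuclideanSpace ℝ (Fin N)) : (inner ℝ x y : ℝ) = ∑ a, x a * y a := by
  simp [PiLp.inner_apply, RCLike.inner_apply]
  exact Finset.sum_congr rfl fun _ _ => mul_comm _ _

lemma ey_H (f : Fin m → EuclideanSpace ℝ (Fin N))
    (S : Matrix (Fin N) (Fin N) ℝ) (hS : ∀ a b, S a b = ∑ i, f i a * f i b)
    (y x : EuclideanSpace ℝ (Fin N)) :
    (inner ℝ (show EuclideanSpace ℝ (Fin N) from WithLp.toLp 2 (S.mulVec y)) x : ℝ)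
      = ∑ i, (inner ℝ (f i) y : ℝ) * (inner ℝ (f i) x : ℝ) := by
  simp only [ey_inner_eq, PiLp.toLp_apply, Matrix.mulVec, dotProduct, hS, Finset.sum_mul, Finset.mul_sum]
  rw [ey_sum_rot]
  refine Finset.sum_congr rfl fun i _ => ?_
  exact Finset.sum_congr rfl fun a _ => Finset.sum_congr rfl fun b _ => by ring

lemma ey_gdecomp (f : Fin m → EuclideanSpace ℝ (Fin N))
    (S : Matrix (Fin N) (Fin N) ℝ) (hSe : ∀ a b, S a b = ∑ i, f i a * f i b)
    (hS : S.IsHermitian) (x : EuclideanSpace ℝ (Fin N)) :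
    ∑ i, (inner ℝ (f i) x : ℝ) ^ 2
      = ∑ k, hS.eigenvalues k * (inner ℝ (hS.eigenvectorBasis k) x : ℝ) ^ 2 := by
  have h1 : ∀ k, hS.eigenvalues k * (inner ℝ (hS.eigenvectorBasis k) x : ℝ)
      = ∑ i, (inner ℝ (f i) (hS.eigenvectorBasis k) : ℝ) * (inner ℝ (f i) x : ℝ) := by
    intro k
    rw [← ey_H f S hSe]
    have h2 : (show EuclideanSpace ℝ (Fin N) from WithLp.toLp 2 (S.mulVec (hS.eigenvectorBasis k)))
        = hS.eigenvalues k • hS.eigenvectorBasis k := by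
      ext a; simp [hS.mulVec_eigenvectorBasis k]
    rw [h2, real_inner_smul_left]
  calc ∑ i, (inner ℝ (f i) x : ℝ) ^ 2
      = ∑ i, (inner ℝ (f i) x : ℝ) * ∑ k, (inner ℝ (f i) (hS.eigenvectorBasis k) : ℝ)
          * (inner ℝ (hS.eigenvectorBasis k) x : ℝ) := by
        refine Finset.sum_congr rfl fun i _ => ?_
        rw [(hS.eigenvectorBasis).sum_inner_mul_inner (f i) x]
        ring
    _ = ∑ k, (∑ i, (inner ℝ (f i) (hS.eigenvectorBasis k) : ℝ) * (inner ℝ (f i) x : ℝ))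
          * (inner ℝ (hS.eigenvectorBasis k) x : ℝ) := by
        simp_rw [Finset.mul_sum, Finset.sum_mul]
        rw [Finset.sum_comm]
        exact Finset.sum_congr rfl fun k _ => Finset.sum_congr rfl fun i _ => by ring
    _ = ∑ k, hS.eigenvalues k * (inner ℝ (hS.eigenvectorBasis k) x : ℝ) ^ 2 := by
        refine Finset.sum_congr rfl fun k _ => ?_
        rw [← h1 k]
        ring

section EYcharpoly
variable {R : Type*} [CommRing R]


lemma ey_charmatrix_conj {ι : Type*} [Fintype ι] [DecidableEq ι]
    (P Q M : Matrix ι ι R) (hPQ : P * Q = 1) :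
    Matrix.charmatrix (P * M * Q) = (P.map C) * M.charmatrix * (Q.map C) := by
  have hPQ' : (P.map C) * (Q.map C) = 1 := by
    rw [← Matrix.map_mul, hPQ, Matrix.map_one _ (map_zero C) (map_one C)]
  unfold Matrix.charmatrix
  rw [Matrix.mul_sub, Matrix.sub_mul]
  congr 1
  · rw [Matrix.scalar_apply, ← Matrix.smul_one_eq_diagonal]
    rw [Matrix.mul_smul, Matrix.mul_one, Matrix.smul_mul, hPQ']
  · simp [Matrix.map_mul]

lemma ey_charpoly_conj {ι : Type*} [Fintype ι] [DecidableEq ι]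
    (P Q M : Matrix ι ι R) (hPQ : P * Q = 1) :
    (P * M * Q).charpoly = M.charpoly := by
  have hPQ' : (P.map C) * (Q.map C) = 1 := by
    rw [← Matrix.map_mul, hPQ, Matrix.map_one _ (map_zero C) (map_one C)]
  unfold Matrix.charpoly
  rw [ey_charmatrix_conj P Q M hPQ, Matrix.det_mul, Matrix.det_mul]
  have hdet : (P.map C).det * (Q.map C).det = 1 := by
    rw [← Matrix.det_mul, hPQ', Matrix.det_one]
  linear_combination M.charmatrix.det * hdet

lemma ey_charpoly_zero {ι : Type*} [Fintype ι] [DecidableEq ι] :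
    (0 : Matrix ι ι R).charpoly = X ^ (Fintype.card ι) := by
  unfold Matrix.charpoly Matrix.charmatrix
  simp [Matrix.det_diagonal]

lemma ey_charpoly_mul_comm {nn mm : ℕ} (A : Matrix (Fin nn) (Fin mm) R)
    (B : Matrix (Fin mm) (Fin nn) R) :
    (A * B).charpoly * X ^ mm = (B * A).charpoly * X ^ nn := by
  have key : (Matrix.fromBlocks 1 A 0 1 : Matrix (Fin nn ⊕ Fin mm) (Fin nn ⊕ Fin mm) R) * Matrix.fromBlocks 0 0 B (B * A) *
      Matrix.fromBlocks 1 (-A) 0 1 = Matrix.fromBlocks (A * B) 0 B 0 := by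
    simp [Matrix.fromBlocks_multiply, Matrix.mul_assoc]
  have hPQ : (Matrix.fromBlocks 1 A 0 1 : Matrix (Fin nn ⊕ Fin mm) (Fin nn ⊕ Fin mm) R) *
      (Matrix.fromBlocks 1 (-A) 0 1 : Matrix (Fin nn ⊕ Fin mm) (Fin nn ⊕ Fin mm) R) = 1 := by
    simp [Matrix.fromBlocks_multiply, ← Matrix.fromBlocks_one]
  have h := ey_charpoly_conj _ _ (Matrix.fromBlocks 0 0 B (B * A)) hPQ
  rw [key] at h
  rw [Matrix.charpoly_fromBlocks_zero₁₂, Matrix.charpoly_fromBlocks_zero₁₂] at h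
  rw [ey_charpoly_zero, ey_charpoly_zero] at h
  simpa [Fintype.card_fin, mul_comm] using h

lemma ey_charpoly_diagonal {ι : Type*} [Fintype ι] [DecidableEq ι] (d : ι → ℝ) :
    (Matrix.diagonal d).charpoly = ∏ i, (X - C (d i)) := by
  unfold Matrix.charpoly Matrix.charmatrix
  have : Matrix.scalar ι (X : ℝ[X]) - (C : ℝ →+* ℝ[X]).mapMatrix (Matrix.diagonal d)
      = Matrix.diagonal (fun i => X - C (d i)) := by
    ext i j
    by_cases h : i = j <;> simp [h, Matrix.scalar_apply, Matrix.diagonal_apply, Matrix.map_apply]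
  rw [this, Matrix.det_diagonal]

lemma ey_charpoly_hermitian {nn : ℕ} (S : Matrix (Fin nn) (Fin nn) ℝ) (hS : S.IsHermitian) :
    S.charpoly = ∏ k, (X - C (hS.eigenvalues k)) := by
  have hspec := hS.spectral_theorem
  have hPQ : (hS.eigenvectorUnitary : Matrix (Fin nn) (Fin nn) ℝ) *
      (star hS.eigenvectorUnitary : Matrix (Fin nn) (Fin nn) ℝ) = 1 := by
    exact (Matrix.mem_unitaryGroup_iff).mp hS.eigenvectorUnitary.2
  calc S.charpoly
      = ((hS.eigenvectorUnitary : Matrix (Fin nn) (Fin nn) ℝ) *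
          Matrix.diagonal (RCLike.ofReal ∘ hS.eigenvalues) *
          (star hS.eigenvectorUnitary : Matrix (Fin nn) (Fin nn) ℝ)).charpoly := by
          conv_lhs => rw [hspec]
          rw [Unitary.conjStarAlgAut_apply]
    _ = (Matrix.diagonal (RCLike.ofReal ∘ hS.eigenvalues)).charpoly := by
        exact ey_charpoly_conj _ _ _ hPQ
    _ = ∏ k, (X - C (hS.eigenvalues k)) := by
        rw [ey_charpoly_diagonal]
        rfl

end EYcharpoly


lemma ey_prod_eq {j t : ℕ} (g : Fin j → ℝ) :
    (∏ i, (X - C (g i))) * X ^ t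
      = ((univ.val.map g + Multiset.replicate t (0:ℝ)).map (fun r => X - C r)).prod := by
  rw [Multiset.map_add, Multiset.prod_add, Multiset.map_replicate, Multiset.prod_replicate]
  rw [Finset.prod_eq_multiset_prod]
  simp only [Multiset.map_map, map_zero, sub_zero, Function.comp_def]

lemma ey_multiset_eq {N m : ℕ} (lam : Fin m → ℝ) (μ : Fin N → ℝ)
    (hpoly : (∏ i, (X - C (lam i))) * X ^ N = (∏ k, (X - C (μ k))) * X ^ m) :
    univ.val.map lam + Multiset.replicate N (0:ℝ)
      = univ.val.map μ + Multiset.replicate m (0:ℝ) := by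
  have h1 := ey_prod_eq (t := N) lam
  have h2 := ey_prod_eq (t := m) μ
  have h3 : ((univ.val.map lam + Multiset.replicate N (0:ℝ)).map (fun r => X - C r)).prod
      = ((univ.val.map μ + Multiset.replicate m (0:ℝ)).map (fun r => X - C r)).prod := by
    rw [← h1, ← h2, hpoly]
  have := congrArg Polynomial.roots h3
  rwa [Polynomial.roots_multiset_prod_X_sub_C, Polynomial.roots_multiset_prod_X_sub_C] at this

lemma ey_card_lt {m n : ℕ} (hnm : n < m) :
    (univ.filter fun i : Fin m => (i : ℕ) < n).card = n := by
  have : (univ.filter fun i : Fin m => (i:ℕ) < n) = Finset.image (Fin.castLE hnm.le) univ := by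
    ext i
    simp only [Finset.mem_filter, Finset.mem_univ, true_and, Finset.mem_image]
    constructor
    · intro h; exact ⟨⟨(i : ℕ), h⟩, Fin.ext rfl⟩
    · rintro ⟨j, rfl⟩; exact j.isLt
  rw [this, Finset.card_image_of_injective _ (Fin.castLE_injective hnm.le)]
  simp

lemma ey_count {N m : ℕ} (lam : Fin m → ℝ) (μ : Fin N → ℝ) (c : ℝ) (hc : 0 ≤ c)
    (hM : univ.val.map lam + Multiset.replicate N (0:ℝ)
      = univ.val.map μ + Multiset.replicate m (0:ℝ)) :
    (univ.filter fun k : Fin N => c < μ k).card = (univ.filter fun i : Fin m => c < lam i).card := by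
  classical
  have h := congrArg (Multiset.countP (fun x => c < x)) hM
  rw [Multiset.countP_add, Multiset.countP_add] at h
  have hrep : ∀ t : ℕ, Multiset.countP (fun x => c < x) (Multiset.replicate t (0:ℝ)) = 0 := by
    intro t
    rw [Multiset.countP_eq_zero]
    intro a ha
    rw [Multiset.eq_of_mem_replicate ha]
    exact fun hlt => absurd hlt (not_lt.mpr hc)
  rw [hrep, hrep, add_zero, add_zero, Multiset.countP_map, Multiset.countP_map] at h
  exact h.symm

/-- Uniqueness of the optimal subspace of dimension at most `n` when there is a gap
between the `n`-th and `(n+1)`-st eigenvalues of the Gram matrix. -/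
theorem eckart_young_unique {N m : ℕ} (f : Fin m → EuclideanSpace ℝ (Fin N))
    (G : Matrix (Fin m) (Fin m) ℝ) (hG : ∀ i j, G i j = inner ℝ (f i) (f j))
    (lam : Fin m → ℝ)
    (hdec : ∀ i j : Fin m, i ≤ j → lam j ≤ lam i)
    (hnonneg : ∀ i, 0 ≤ lam i)
    (hchar : G.charpoly = ∏ i, (Polynomial.X - Polynomial.C (lam i)))
    (n : ℕ) (hn : 1 ≤ n) (hnm : n < m)
    (hgap : lam ⟨n, hnm⟩ < lam ⟨n - 1, by omega⟩) :
    ∀ V V' : Submodule ℝ (EuclideanSpace ℝ (Fin N)),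
      Module.finrank ℝ V ≤ n → Module.finrank ℝ V' ≤ n →
      (∀ U : Submodule ℝ (EuclideanSpace ℝ (Fin N)), Module.finrank ℝ U ≤ n →
        (∑ i, Metric.infDist (f i) (V : Set (EuclideanSpace ℝ (Fin N))) ^ 2) ≤
          ∑ i, Metric.infDist (f i) (U : Set (EuclideanSpace ℝ (Fin N))) ^ 2) →
      (∀ U : Submodule ℝ (EuclideanSpace ℝ (Fin N)), Module.finrank ℝ U ≤ n →
        (∑ i, Metric.infDist (f i) (V' : Set (EuclideanSpace ℝ (Fin N))) ^ 2) ≤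
          ∑ i, Metric.infDist (f i) (U : Set (EuclideanSpace ℝ (Fin N))) ^ 2) →
      V = V' := by
  classical
  intro V V' hV hV' hmin hmin'
  set A : Matrix (Fin N) (Fin m) ℝ := Matrix.of fun a i => f i a with hA
  set S : Matrix (Fin N) (Fin N) ℝ := A * A.transpose with hSdef
  have hSe : ∀ a b, S a b = ∑ i, f i a * f i b := by
    intro a b
    simp [hSdef, Matrix.mul_apply, hA]
  have hS : S.IsHermitian := by
    ext a b
    simp only [Matrix.conjTranspose_apply, star_trivial, hSe]
    exact Finset.sum_congr rfl fun i _ => by ring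
  have hGA : G = A.transpose * A := by
    ext i j
    rw [hG i j, ey_inner_eq]
    simp [Matrix.mul_apply, hA]
  set μ : Fin N → ℝ := hS.eigenvalues with hμ
  set v : OrthonormalBasis (Fin N) ℝ (EuclideanSpace ℝ (Fin N)) := hS.eigenvectorBasis with hv
  have hpoly : (∏ i, (X - C (lam i))) * X ^ N = (∏ k, (X - C (μ k))) * X ^ m := by
    rw [← hchar, ← ey_charpoly_hermitian S hS]
    rw [hGA, hSdef]
    exact (ey_charpoly_mul_comm A A.transpose).symm
  have hM := ey_multiset_eq lam μ hpoly
  set c : ℝ := lam ⟨n, hnm⟩ with hcdef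
  have hc : 0 ≤ c := hnonneg _
  set K : Finset (Fin N) := Finset.univ.filter (fun k => c < μ k) with hK
  have hKc : ∀ k ∈ K, c < μ k := fun k hk => (Finset.mem_filter.mp hk).2
  have hKc' : ∀ k ∉ K, μ k ≤ c := by
    intro k hk
    by_contra h
    exact hk (Finset.mem_filter.mpr ⟨Finset.mem_univ _, lt_of_not_ge h⟩)
  have hKn : K.card = n := by
    rw [hK, ey_count lam μ c hc hM]
    have hfe : (Finset.univ.filter fun i : Fin m => c < lam i)
        = (Finset.univ.filter fun i : Fin m => (i : ℕ) < n) := by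
      apply Finset.filter_congr
      intro i _
      constructor
      · intro h
        by_contra hni
        have hle : (⟨n, hnm⟩ : Fin m) ≤ i := by
          simp only [Fin.le_def]
          omega
        have := hdec _ _ hle
        rw [← hcdef] at this
        linarith
      · intro h
        have hle : i ≤ (⟨n - 1, by omega⟩ : Fin m) := by
          simp only [Fin.le_def]
          omega
        have := hdec _ _ hle
        linarith
    rw [hfe, ey_card_lt hnm]
  have hg : ∀ x : EuclideanSpace ℝ (Fin N), ∑ i, (inner ℝ (f i) x : ℝ) ^ 2
      = ∑ k, μ k * (inner ℝ (v k) x : ℝ) ^ 2 := fun x => ey_gdecomp f S hSe hS x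
  -- the optimal subspace W
  set W : Submodule ℝ (EuclideanSpace ℝ (Fin N)) :=
    Submodule.span ℝ (K.image v : Set (EuclideanSpace ℝ (Fin N))) with hW
  set bW : OrthonormalBasis K ℝ W := OrthonormalBasis.span v.orthonormal K with hbW
  have hWrank : Module.finrank ℝ W = n := by
    rw [Module.finrank_eq_card_basis bW.toBasis, Fintype.card_coe, hKn]
  have hWval : ∑ i, Metric.infDist (f i) (W : Set (EuclideanSpace ℝ (Fin N))) ^ 2
      = ∑ i, ‖f i‖ ^ 2 - ∑ k ∈ K, μ k := by
    rw [ey_value f W bW]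
    congr 1
    have hcoe : ∀ j : K, ((bW j : EuclideanSpace ℝ (Fin N))) = v j := by
      intro j
      rw [hbW]
      exact OrthonormalBasis.span_apply v.orthonormal K j
    have hterm : ∀ j : K, ∑ i, (inner ℝ (f i) ((bW j : EuclideanSpace ℝ (Fin N))) : ℝ) ^ 2
        = μ j := by
      intro j
      rw [hcoe j, hg (v j)]
      have hON := v.orthonormal
      rw [orthonormal_iff_ite] at hON
      rw [Finset.sum_eq_single (j : Fin N)]
      · rw [hON j j]
        simp
      · intro k _ hkj
        rw [hON k j]
        simp [hkj]
      · intro h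
        exact absurd (Finset.mem_univ _) h
    rw [Finset.sum_congr rfl fun j _ => hterm j]
    exact Finset.sum_coe_sort K μ
  -- both minimizers equal W
  have key : ∀ U : Submodule ℝ (EuclideanSpace ℝ (Fin N)), Module.finrank ℝ U ≤ n →
      (∀ U' : Submodule ℝ (EuclideanSpace ℝ (Fin N)), Module.finrank ℝ U' ≤ n →
        (∑ i, Metric.infDist (f i) (U : Set (EuclideanSpace ℝ (Fin N))) ^ 2) ≤
          ∑ i, Metric.infDist (f i) (U' : Set (EuclideanSpace ℝ (Fin N))) ^ 2) →
      U = W := by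
    intro U hU hminU
    have hKF := ey_kyfan f v μ hg c hc K hKc hKc' hKn U hU
    have h1 := hKF.1
    have h2 : (∑ i, Metric.infDist (f i) (U : Set (EuclideanSpace ℝ (Fin N))) ^ 2)
        ≤ ∑ i, ‖f i‖ ^ 2 - ∑ k ∈ K, μ k := by
      rw [← hWval]
      exact hminU W (le_of_eq hWrank)
    have heq := le_antisymm h2 h1
    have hmem := hKF.2 heq
    have hWU : W ≤ U := by
      rw [hW, Submodule.span_le]
      intro x hx
      rcases Finset.mem_image.mp (by exact_mod_cast hx) with ⟨k, hk, rfl⟩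
      exact hmem k hk
    exact (Submodule.eq_of_le_of_finrank_le hWU (by rw [hWrank]; exact hU)).symm
  rw [key V hV hmin, key V' hV' hmin']
end

section
/- Let f_1, …, f_m be vectors in ℝ^N and let l, n ≥ 1. Then there exists a bundle V_0 = (V_1^0, …, V_l^0) of linear subspaces of ℝ^N with dim V_j^0 ≤ n for all j, such that Σ_{i=1}^m min_{1≤j≤l} dist(f_i, V_j^0)² ≤ Σ_{i=1}^m min_{1≤j≤l} dist(f_i, V_j)² for every l-tuple (V_1, …, V_l) of linear subspaces of ℝ^N with dim V_j ≤ n for all j. -/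
set_option maxHeartbeats 1000000

open Metric Finset

section Aux

open RealInnerProductSpace

variable {N : ℕ}

local notation "E" => EuclideanSpace ℝ (Fin N)

/-- distance to the range of a symmetric idempotent operator -/
lemma infDist_range_symm_idem (P : E →L[ℝ] E)
    (hsym : ∀ x y : E, ⟪P x, y⟫ = ⟪x, P y⟫) (hidem : ∀ x, P (P x) = P x) (x : E) :
    Metric.infDist x ((LinearMap.range (P : E →ₗ[ℝ] E) : Submodule ℝ E) : Set E)
      = ‖x - P x‖ := by
  have hmem : P x ∈ (LinearMap.range (P : E →ₗ[ℝ] E) : Set E) := ⟨x, rfl⟩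
  have hperp : ∀ z : E, ⟪x - P x, P z⟫ = 0 := by
    intro z
    rw [← hsym]
    simp [map_sub, hidem]
  apply le_antisymm
  · simpa [dist_eq_norm] using Metric.infDist_le_dist_of_mem hmem
  · rw [Metric.infDist_eq_iInf]
    apply le_ciInf
    rintro ⟨y, z, rfl⟩
    have hz : (P : E →ₗ[ℝ] E) z = P z := rfl
    have key : ‖x - P z‖ ^ 2 = ‖x - P x‖ ^ 2 + ‖P x - P z‖ ^ 2 := by
      have h1 : x - P z = (x - P x) + (P x - P z) := by abel
      have h2 : ⟪x - P x, P x - P z⟫ = 0 := by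
        have : P x - P z = P (x - z) := by simp [map_sub]
        rw [this, hperp]
      rw [h1, norm_add_sq_real, h2]; ring
    have h3 : 0 ≤ ‖x - P x‖ := norm_nonneg _
    have h4 : 0 ≤ ‖x - P z‖ := norm_nonneg _
    have h5 : 0 ≤ ‖P x - P z‖ ^ 2 := sq_nonneg _
    have : ‖x - P x‖ ≤ ‖x - P z‖ := by nlinarith
    simpa [dist_eq_norm, hz] using this

lemma proj_props (V : Submodule ℝ E) :
    (∀ x y : E, ⟪(V.subtypeL ∘L Submodule.orthogonalProjectionOnto V) x, y⟫
        = ⟪x, (V.subtypeL ∘L Submodule.orthogonalProjectionOnto V) y⟫) ∧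
    (∀ x, (V.subtypeL ∘L Submodule.orthogonalProjectionOnto V) ((V.subtypeL ∘L Submodule.orthogonalProjectionOnto V) x)
        = (V.subtypeL ∘L Submodule.orthogonalProjectionOnto V) x) ∧
    LinearMap.range ((V.subtypeL ∘L Submodule.orthogonalProjectionOnto V : E →L[ℝ] E) : E →ₗ[ℝ] E) = V ∧
    LinearMap.trace ℝ E ((V.subtypeL ∘L Submodule.orthogonalProjectionOnto V : E →L[ℝ] E) : E →ₗ[ℝ] E)
      = (Module.finrank ℝ V : ℝ) := by
  set Q : E →L[ℝ] E := V.subtypeL ∘L Submodule.orthogonalProjectionOnto V with hQ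
  have hsym := Submodule.starProjection_isSymmetric (𝕜 := ℝ) V
  have hid : ∀ x ∈ V, Q x = x := by
    intro x hx
    exact Submodule.starProjection_eq_self_iff.mpr hx
  have hmem : ∀ x, Q x ∈ V := fun x => (Submodule.orthogonalProjectionOnto V x).2
  have hproj : LinearMap.IsProj V (Q : E →ₗ[ℝ] E) := ⟨hmem, hid⟩
  refine ⟨fun x y => hsym x y, ?_, ?_, hproj.trace⟩
  · intro x; exact hid _ (hmem x)
  · ext y
    constructor
    · rintro ⟨z, rfl⟩; exact hmem z
    · intro hy; exact ⟨y, hid y hy⟩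

lemma trace_eq_finrank_range (P : E →L[ℝ] E) (hidem : ∀ x, P (P x) = P x) :
    LinearMap.trace ℝ E (P : E →ₗ[ℝ] E)
      = (Module.finrank ℝ (LinearMap.range (P : E →ₗ[ℝ] E)) : ℝ) := by
  have hproj : LinearMap.IsProj (LinearMap.range (P : E →ₗ[ℝ] E)) (P : E →ₗ[ℝ] E) :=
    ⟨fun x => ⟨x, rfl⟩, by rintro x ⟨y, rfl⟩; exact hidem y⟩
  exact hproj.trace

lemma K_compact (n : ℕ) :
    IsCompact {P : E →L[ℝ] E | (∀ x y : E, ⟪P x, y⟫ = ⟪x, P y⟫) ∧ P * P = P ∧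
      LinearMap.trace ℝ E (P : E →ₗ[ℝ] E) ≤ (n : ℝ)} := by
  apply Metric.isCompact_of_isClosed_isBounded
  · have hA : IsClosed {P : E →L[ℝ] E | ∀ x y : E, ⟪P x, y⟫ = ⟪x, P y⟫} := by
      have heq : {P : E →L[ℝ] E | ∀ x y : E, ⟪P x, y⟫ = ⟪x, P y⟫}
          = ⋂ (x : E) (y : E), {P : E →L[ℝ] E | ⟪P x, y⟫ = ⟪x, P y⟫} := by
        ext P; simp [Set.mem_iInter]
      rw [heq]
      exact isClosed_iInter fun x => isClosed_iInter fun y =>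
        isClosed_eq
          (Continuous.inner ((ContinuousLinearMap.apply ℝ E x).continuous) continuous_const)
          (Continuous.inner continuous_const ((ContinuousLinearMap.apply ℝ E y).continuous))
    have hB : IsClosed {P : E →L[ℝ] E | P * P = P} :=
      isClosed_eq (continuous_id.mul continuous_id) continuous_id
    have hC : IsClosed {P : E →L[ℝ] E |
        LinearMap.trace ℝ E (P : E →ₗ[ℝ] E) ≤ (n : ℝ)} := by
      have hT : Continuous fun P : E →L[ℝ] E => LinearMap.trace ℝ E (P : E →ₗ[ℝ] E) :=
        LinearMap.continuous_of_finiteDimensional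
          ((LinearMap.trace ℝ E).comp (ContinuousLinearMap.coeLM ℝ))
      exact isClosed_le hT continuous_const
    exact hA.inter (hB.inter hC)
  · rw [Metric.isBounded_iff_subset_closedBall 0]
    refine ⟨1, fun P hP => ?_⟩
    obtain ⟨hsym, hidem, -⟩ := hP
    simp only [Metric.mem_closedBall, dist_zero_right]
    refine ContinuousLinearMap.opNorm_le_bound P zero_le_one fun x => ?_
    rw [one_mul]
    have h1 : ⟪P x, P x⟫ = ⟪x, P x⟫ := by
      rw [hsym x (P x)]
      congr 1
      have := congrArg (fun Q : E →L[ℝ] E => Q x) hidem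
      simpa [ContinuousLinearMap.mul_apply] using this
    have h2 : ‖P x‖ ^ 2 = ⟪x, P x⟫ := by rw [← h1, real_inner_self_eq_norm_sq]
    have h3 : ⟪x, P x⟫ ≤ ‖x‖ * ‖P x‖ := real_inner_le_norm x (P x)
    nlinarith [norm_nonneg (P x), norm_nonneg x]

end Aux

/-- Existence of an optimal bundle of at most `l` subspaces of `ℝ^N`, each of dimension
at most `n`, minimizing the sum of the squared distances of the data to the closest
subspace of the bundle. -/
theorem exists_optimal_bundle_rn {N m : ℕ} (f : Fin m → EuclideanSpace ℝ (Fin N))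
    (l n : ℕ) (hl : 1 ≤ l) (hn : 1 ≤ n) :
    ∃ V0 : Fin l → Submodule ℝ (EuclideanSpace ℝ (Fin N)),
      (∀ j, Module.finrank ℝ (V0 j) ≤ n) ∧
      ∀ V : Fin l → Submodule ℝ (EuclideanSpace ℝ (Fin N)),
        (∀ j, Module.finrank ℝ (V j) ≤ n) →
        (∑ i, ⨅ j, Metric.infDist (f i) (V0 j : Set (EuclideanSpace ℝ (Fin N))) ^ 2) ≤
          ∑ i, ⨅ j, Metric.infDist (f i) (V j : Set (EuclideanSpace ℝ (Fin N))) ^ 2 := by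
  classical
  haveI : Nonempty (Fin l) := ⟨⟨0, hl⟩⟩
  set K : Set (EuclideanSpace ℝ (Fin N) →L[ℝ] EuclideanSpace ℝ (Fin N)) :=
    {P : EuclideanSpace ℝ (Fin N) →L[ℝ] EuclideanSpace ℝ (Fin N) | (∀ x y : EuclideanSpace ℝ (Fin N), inner ℝ (P x) y = (inner ℝ x (P y) : ℝ)) ∧ P * P = P ∧
      LinearMap.trace ℝ (EuclideanSpace ℝ (Fin N)) (P : EuclideanSpace ℝ (Fin N) →ₗ[ℝ] EuclideanSpace ℝ (Fin N)) ≤ (n : ℝ)} with hK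
  set g : (Fin l → (EuclideanSpace ℝ (Fin N) →L[ℝ] EuclideanSpace ℝ (Fin N))) → ℝ :=
    fun P => ∑ i, ⨅ j, ‖f i - P j (f i)‖ ^ 2 with hg
  have hgcont : Continuous g := by
    have : g = fun P => ∑ i,
        (univ : Finset (Fin l)).inf' univ_nonempty (fun j => ‖f i - P j (f i)‖ ^ 2) := by
      funext P
      exact Finset.sum_congr rfl fun i _ => (Finset.inf'_univ_eq_ciInf _).symm
    rw [this]
    apply continuous_finset_sum
    intro i _
    apply Continuous.finset_inf'_apply
    intro j _
    exact (continuous_const.sub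
      (((ContinuousLinearMap.apply ℝ (EuclideanSpace ℝ (Fin N)) (f i)).continuous).comp (continuous_apply j))).norm.pow 2
  have hKl : IsCompact (Set.univ.pi fun _ : Fin l => K) :=
    isCompact_univ_pi fun _ => K_compact n
  have hne : (Set.univ.pi fun _ : Fin l => K).Nonempty := by
    refine ⟨fun _ => 0, fun j _ => ?_⟩
    refine ⟨by simp, by simp, ?_⟩
    simp only [ContinuousLinearMap.coe_zero, map_zero]
    exact_mod_cast Nat.cast_nonneg n
  obtain ⟨P0, hP0, hmin⟩ := hKl.exists_isMinOn hne hgcont.continuousOn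
  have hP0' : ∀ j, P0 j ∈ K := fun j => hP0 j (Set.mem_univ j)
  have hidem0 : ∀ j x, P0 j (P0 j x) = P0 j x := by
    intro j x
    have := congrArg (fun Q : EuclideanSpace ℝ (Fin N) →L[ℝ] EuclideanSpace ℝ (Fin N) => Q x) (hP0' j).2.1
    simpa [ContinuousLinearMap.mul_apply] using this
  refine ⟨fun j => LinearMap.range ((P0 j : EuclideanSpace ℝ (Fin N) →L[ℝ] EuclideanSpace ℝ (Fin N)) : EuclideanSpace ℝ (Fin N) →ₗ[ℝ] EuclideanSpace ℝ (Fin N)), ?_, ?_⟩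
  · intro j
    have htr := (hP0' j).2.2
    rw [trace_eq_finrank_range (P0 j) (hidem0 j)] at htr
    exact_mod_cast htr
  · intro V hV
    set Q : Fin l → (EuclideanSpace ℝ (Fin N) →L[ℝ] EuclideanSpace ℝ (Fin N)) :=
      fun j => (V j).subtypeL ∘L Submodule.orthogonalProjectionOnto (V j) with hQdef
    have hprops := fun j => proj_props (V j)
    have hQmem : Q ∈ Set.univ.pi fun _ : Fin l => K := by
      intro j _
      obtain ⟨hs, hi, hr, ht⟩ := hprops j
      refine ⟨hs, ?_, ?_⟩
      · exact ContinuousLinearMap.ext fun x => by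
          rw [ContinuousLinearMap.mul_apply]; exact hi x
      · rw [ht]; exact_mod_cast hV j
    have key : g P0 ≤ g Q := hmin hQmem
    have hd0 : ∀ i j, Metric.infDist (f i)
        ((LinearMap.range ((P0 j : EuclideanSpace ℝ (Fin N) →L[ℝ] EuclideanSpace ℝ (Fin N)) : EuclideanSpace ℝ (Fin N) →ₗ[ℝ] EuclideanSpace ℝ (Fin N)) : Submodule ℝ (EuclideanSpace ℝ (Fin N))) : Set (EuclideanSpace ℝ (Fin N)))
          = ‖f i - P0 j (f i)‖ :=
      fun i j => infDist_range_symm_idem (P0 j) (hP0' j).1 (hidem0 j) (f i)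
    have hdV : ∀ i j, Metric.infDist (f i) ((V j : Submodule ℝ (EuclideanSpace ℝ (Fin N))) : Set (EuclideanSpace ℝ (Fin N)))
        = ‖f i - Q j (f i)‖ := by
      intro i j
      obtain ⟨hs, hi, hr, ht⟩ := hprops j
      rw [← hr]
      exact infDist_range_symm_idem (Q j) hs hi (f i)
    have e1 : (∑ i, ⨅ j, Metric.infDist (f i)
        ((LinearMap.range ((P0 j : EuclideanSpace ℝ (Fin N) →L[ℝ] EuclideanSpace ℝ (Fin N)) : EuclideanSpace ℝ (Fin N) →ₗ[ℝ] EuclideanSpace ℝ (Fin N)) : Submodule ℝ (EuclideanSpace ℝ (Fin N))) : Set (EuclideanSpace ℝ (Fin N))) ^ 2)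
        = g P0 :=
      Finset.sum_congr rfl fun i _ => iInf_congr fun j => by rw [hd0 i j]
    have e2 : (∑ i, ⨅ j, Metric.infDist (f i) ((V j : Submodule ℝ (EuclideanSpace ℝ (Fin N))) : Set (EuclideanSpace ℝ (Fin N))) ^ 2)
        = g Q :=
      Finset.sum_congr rfl fun i _ => iInf_congr fun j => by rw [hdV i j]
    simp only [e1, e2]
    exact key
end

section
/- Let f_1, …, f_m be vectors in ℝ^N, let l ≥ 1, and let n_1, …, n_l be positive integers. Then there exists a bundle V_0 = (V_1^0, …, V_l^0) of linear subspaces of ℝ^N with dim V_j^0 ≤ n_j for each j, such that Σ_{i=1}^m min_{1≤j≤l} dist(f_i, V_j^0)² ≤ Σ_{i=1}^m min_{1≤j≤l} dist(f_i, V_j)² for every l-tuple (V_1, …, V_l) of linear subspaces of ℝ^N with dim V_j ≤ n_j for each j. -/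
open Metric Finset

open RealInnerProductSpace in
theorem aux_infDist_span_sq {E : Type*} [NormedAddCommGroup E] [InnerProductSpace ℝ E]
    {k : ℕ} (v : Fin k → E)
    (horth : ∀ a b, a ≠ b → ⟪v a, v b⟫ = 0)
    (hnorm : ∀ a, v a = 0 ∨ ‖v a‖ = 1) (x : E) :
    infDist x (Submodule.span ℝ (Set.range v) : Set E) ^ 2
      = ‖x‖ ^ 2 - ∑ a, ⟪x, v a⟫ ^ 2 := by
  classical
  set K := Submodule.span ℝ (Set.range v) with hK
  set p : E := ∑ a, ⟪x, v a⟫ • v a with hp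
  have hpK : p ∈ K := Submodule.sum_mem _ fun a _ =>
    Submodule.smul_mem _ _ (Submodule.subset_span ⟨a, rfl⟩)
  have hxv : ∀ b, ⟪x - p, v b⟫ = 0 := by
    intro b
    rcases hnorm b with h0 | h1
    · simp [h0]
    · have hpv : ⟪p, v b⟫ = ⟪x, v b⟫ := by
        rw [hp, sum_inner]
        rw [Finset.sum_eq_single b]
        · rw [real_inner_smul_left, real_inner_self_eq_norm_sq, h1]; ring
        · intro a _ hab
          rw [real_inner_smul_left, horth a b hab, mul_zero]
        · simp
      rw [inner_sub_left, hpv, sub_self]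
  have hperp : ∀ y ∈ K, ⟪x - p, y⟫ = 0 := by
    intro y hy
    rw [hK] at hy
    rw [Submodule.mem_span_range_iff_exists_fun] at hy
    obtain ⟨c, rfl⟩ := hy
    rw [inner_sum]
    refine Finset.sum_eq_zero fun a _ => ?_
    rw [real_inner_smul_right, hxv a, mul_zero]
  have hclosest : ∀ y ∈ K, ‖x - p‖ ≤ ‖x - y‖ := by
    intro y hy
    have h1 : x - y = (x - p) + (p - y) := by abel
    have h2 : ⟪x - p, p - y⟫ = 0 := hperp _ (Submodule.sub_mem _ hpK hy)
    have h3 : ‖x - y‖ ^ 2 = ‖x - p‖ ^ 2 + ‖p - y‖ ^ 2 := by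
      rw [h1, norm_add_sq_real, h2]; ring
    nlinarith [norm_nonneg (x - p), norm_nonneg (x - y), norm_nonneg (p - y)]
  have hne : (K : Set E).Nonempty := ⟨0, K.zero_mem⟩
  have hdist : infDist x (K : Set E) = ‖x - p‖ := by
    refine le_antisymm ?_ ?_
    · simpa [dist_eq_norm] using infDist_le_dist_of_mem (x := x) hpK
    · by_contra h
      push_neg at h
      obtain ⟨y, hyK, hyd⟩ := (infDist_lt_iff hne).1 h
      rw [dist_eq_norm] at hyd
      exact absurd hyd (not_lt.2 (hclosest y hyK))
  have hxp : ⟪x, p⟫ = ∑ a, ⟪x, v a⟫ ^ 2 := by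
    rw [hp, inner_sum]
    exact Finset.sum_congr rfl fun a _ => by rw [real_inner_smul_right]; ring
  have hpp : ⟪p, p⟫ = ⟪x, p⟫ := by
    have := hperp p hpK
    rw [inner_sub_left] at this
    linarith
  have hpx : ⟪p, x⟫ = ∑ a, ⟪x, v a⟫ ^ 2 := by rw [real_inner_comm, hxp]
  rw [hdist, ← real_inner_self_eq_norm_sq, inner_sub_sub_self,
    real_inner_self_eq_norm_sq, hpp, hxp, hpx]
  ring

set_option maxHeartbeats 1000000 in

set_option maxHeartbeats 1000000 in
open RealInnerProductSpace in
/-- Existence of an optimal bundle of `l` subspaces of `ℝ^N` with prescribed dimension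
bounds `n_1, …, n_l`. -/
theorem exists_optimal_bundle_rn_dims {N m : ℕ} (f : Fin m → EuclideanSpace ℝ (Fin N))
    (l : ℕ) (hl : 1 ≤ l) (n : Fin l → ℕ) (hn : ∀ j, 1 ≤ n j) :
    ∃ V0 : Fin l → Submodule ℝ (EuclideanSpace ℝ (Fin N)),
      (∀ j, Module.finrank ℝ (V0 j) ≤ n j) ∧
      ∀ V : Fin l → Submodule ℝ (EuclideanSpace ℝ (Fin N)),
        (∀ j, Module.finrank ℝ (V j) ≤ n j) →
        (∑ i, ⨅ j, Metric.infDist (f i) (V0 j : Set (EuclideanSpace ℝ (Fin N))) ^ 2) ≤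
          ∑ i, ⨅ j, Metric.infDist (f i) (V j : Set (EuclideanSpace ℝ (Fin N))) ^ 2 := by
  classical
  haveI : Nonempty (Fin l) := ⟨⟨0, hl⟩⟩
  set S : Set (∀ j : Fin l, Fin (n j) → EuclideanSpace ℝ (Fin N)) :=
    {v | ∀ j, (∀ a b, a ≠ b → ⟪v j a, v j b⟫ = 0) ∧
      ∀ a, v j a = 0 ∨ ‖v j a‖ = 1} with hS
  set G : (∀ j : Fin l, Fin (n j) → EuclideanSpace ℝ (Fin N)) → ℝ :=
    fun v => ∑ i, Finset.univ.inf' Finset.univ_nonempty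
      (fun j => ‖f i‖ ^ 2 - ∑ a, ⟪f i, v j a⟫ ^ 2) with hG
  -- G agrees with the distance functional on S
  have hGF : ∀ v ∈ S, G v = ∑ i, ⨅ j, infDist (f i)
      (Submodule.span ℝ (Set.range (v j)) : Set (EuclideanSpace ℝ (Fin N))) ^ 2 := by
    intro v hv
    refine Finset.sum_congr rfl fun i _ => ?_
    rw [Finset.inf'_univ_eq_ciInf]
    refine iInf_congr fun j => ?_
    rw [aux_infDist_span_sq (v j) (hv j).1 (hv j).2]
  -- S is compact
  have hSclosed : IsClosed S := by
    have hrw : S = (⋂ (j : Fin l), ⋂ (a : Fin (n j)), ⋂ (b : Fin (n j)), ⋂ (_ : a ≠ b),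
          {v : ∀ j : Fin l, Fin (n j) → EuclideanSpace ℝ (Fin N) | ⟪v j a, v j b⟫ = 0}) ∩
        ⋂ (j : Fin l), ⋂ (a : Fin (n j)),
          {v : ∀ j : Fin l, Fin (n j) → EuclideanSpace ℝ (Fin N) |
            ‖v j a‖ * (‖v j a‖ - 1) = 0} := by
      ext v
      simp only [hS, Set.mem_setOf_eq, Set.mem_inter_iff, Set.mem_iInter]
      constructor
      · intro h
        refine ⟨fun j a b hab => (h j).1 a b hab, fun j a => ?_⟩
        rcases (h j).2 a with h0 | h1
        · simp [h0]
        · rw [h1]; ring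
      · intro ⟨h1, h2⟩ j
        refine ⟨fun a b hab => h1 j a b hab, fun a => ?_⟩
        rcases mul_eq_zero.1 (h2 j a) with h0 | h0
        · exact Or.inl (norm_eq_zero.1 h0)
        · exact Or.inr (by linarith)
    rw [hrw]
    have hcont : ∀ (j : Fin l) (a : Fin (n j)),
        Continuous fun v : ∀ j : Fin l, Fin (n j) → EuclideanSpace ℝ (Fin N) => v j a :=
      fun j a => (continuous_apply a).comp (continuous_apply j)
    refine IsClosed.inter ?_ ?_
    · exact isClosed_iInter fun j => isClosed_iInter fun a => isClosed_iInter fun b =>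
        isClosed_iInter fun _ => isClosed_eq (Continuous.inner (hcont j a) (hcont j b))
          continuous_const
    · exact isClosed_iInter fun j => isClosed_iInter fun a =>
        isClosed_eq (((hcont j a).norm).mul (((hcont j a).norm).sub continuous_const))
          continuous_const
  have hSsub : S ⊆ Metric.closedBall 0 1 := by
    intro v hv
    rw [Metric.mem_closedBall, dist_zero_right]
    refine (pi_norm_le_iff_of_nonneg zero_le_one).2 fun j => ?_
    refine (pi_norm_le_iff_of_nonneg zero_le_one).2 fun a => ?_
    rcases (hv j).2 a with h0 | h1
    · simp [h0]
    · rw [h1]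
  have hScompact : IsCompact S :=
    (isCompact_closedBall _ 1).of_isClosed_subset hSclosed hSsub
  have hSne : S.Nonempty :=
    ⟨0, fun j => ⟨fun a b _ => inner_zero_left _, fun a => Or.inl rfl⟩⟩
  -- G is continuous
  have hGcont : Continuous G := by
    refine continuous_finset_sum _ fun i _ => ?_
    refine Continuous.finset_inf'_apply Finset.univ_nonempty fun j _ => ?_
    refine continuous_const.sub (continuous_finset_sum _ fun a _ => ?_)
    exact (Continuous.inner continuous_const
      ((continuous_apply a).comp (continuous_apply j))).pow 2
  obtain ⟨v0, hv0S, hv0min⟩ := hScompact.exists_isMinOn hSne hGcont.continuousOn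
  refine ⟨fun j => Submodule.span ℝ (Set.range (v0 j)), fun j => ?_, ?_⟩
  · simpa [Set.finrank] using finrank_range_le_card (R := ℝ) (v0 j)
  · intro V hV
    -- build a frame for each V j
    have hw : ∀ j : Fin l, ∃ w : Fin (n j) → EuclideanSpace ℝ (Fin N),
        ((∀ a b, a ≠ b → ⟪w a, w b⟫ = 0) ∧ ∀ a, w a = 0 ∨ ‖w a‖ = 1) ∧
        Submodule.span ℝ (Set.range w) = V j := by
      intro j
      set b := stdOrthonormalBasis ℝ (V j) with hb
      set d := Module.finrank ℝ (V j) with hd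
      have hdn : d ≤ n j := hV j
      refine ⟨fun a => if h : (a : ℕ) < d
        then ((b ⟨a, h⟩ : V j) : EuclideanSpace ℝ (Fin N)) else 0, ⟨?_, ?_⟩, ?_⟩
      · intro a c hac
        by_cases ha : (a : ℕ) < d
        · by_cases hc : (c : ℕ) < d
          · simp only [dif_pos ha, dif_pos hc]
            have hne2 : (⟨(a : ℕ), ha⟩ : Fin d) ≠ ⟨(c : ℕ), hc⟩ := by
              intro h
              rw [Fin.mk.injEq] at h
              exact hac (Fin.ext h)
            exact b.orthonormal.2 hne2
          · simp only [dif_pos ha, dif_neg hc, inner_zero_right]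
        · simp only [dif_neg ha, inner_zero_left]
      · intro a
        by_cases ha : (a : ℕ) < d
        · exact Or.inr (by simp only [dif_pos ha]; exact b.orthonormal.1 _)
        · exact Or.inl (by simp only [dif_neg ha])
      · have hVspan : Submodule.span ℝ ((V j).subtype '' Set.range b) = V j := by
          rw [← Submodule.map_span, ← OrthonormalBasis.coe_toBasis b, Module.Basis.span_eq,
            Submodule.map_top, Submodule.range_subtype]
        apply le_antisymm
        · rw [Submodule.span_le]
          rintro _ ⟨a, rfl⟩
          by_cases ha : (a : ℕ) < d
          · simp only [dif_pos ha]; exact (b ⟨a, ha⟩).2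
          · simp only [dif_neg ha]; exact (V j).zero_mem
        · refine le_trans hVspan.ge (Submodule.span_mono ?_)
          rintro _ ⟨_, ⟨i, rfl⟩, rfl⟩
          have hi : (i : ℕ) < d := i.2
          refine ⟨⟨(i : ℕ), lt_of_lt_of_le hi hdn⟩, ?_⟩
          simp only [dif_pos hi, Fin.eta]
          rfl
    choose w hwprop hwspan using hw
    have hwS : w ∈ S := fun j => hwprop j
    have h1 : G v0 ≤ G w := hv0min hwS
    rw [hGF v0 hv0S, hGF w hwS] at h1
    have h2 : (∑ i, ⨅ j, infDist (f i)
          (Submodule.span ℝ (Set.range (w j)) : Set (EuclideanSpace ℝ (Fin N))) ^ 2)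
        = ∑ i, ⨅ j, infDist (f i) (V j : Set (EuclideanSpace ℝ (Fin N))) ^ 2 :=
      Finset.sum_congr rfl fun i _ => iInf_congr fun j => by rw [hwspan j]
    exact le_trans h1 (le_of_eq h2)
end

section
/- Let f_1, …, f_m be vectors in ℝ^N, let l, n ≥ 1, and let ε ≥ 0. If the family F = (f_1, …, f_m) is (l, n, ε)-sparse, then there exist vectors d_1, …, d_s in ℝ^N with s ≤ l · n and coefficient vectors x_1, …, x_m ∈ ℝ^s, each having at most n nonzero entries, such that Σ_{i=1}^m ‖f_i − Σ_{k=1}^s x_{i,k} d_k‖² ≤ ε. -/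
open Metric Finset

/-- The family `f = (f_1, …, f_m)` in `ℝ^N` is `(l, n, ε)`-sparse: there are `l`
subspaces of dimension at most `n` such that the sum of the squared distances of the
data to the closest subspace is at most `ε`. -/
def IsSparse {N m : ℕ} (l n : ℕ) (ε : ℝ) (f : Fin m → EuclideanSpace ℝ (Fin N)) : Prop :=
  ∃ V : Fin l → Submodule ℝ (EuclideanSpace ℝ (Fin N)),
    (∀ j, Module.finrank ℝ (V j) ≤ n) ∧
    (∑ i, ⨅ j, Metric.infDist (f i) (V j : Set (EuclideanSpace ℝ (Fin N))) ^ 2) ≤ ε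

-- auxiliary lemma
-- auxiliary: spanning family of size n for a submodule of finrank ≤ n
lemma exists_span_fun {N n : ℕ} (W : Submodule ℝ (EuclideanSpace ℝ (Fin N)))
    (hW : Module.finrank ℝ W ≤ n) :
    ∃ b : Fin n → EuclideanSpace ℝ (Fin N),
      Submodule.span ℝ (Set.range b) = W := by
  have : FiniteDimensional ℝ W := inferInstance
  set r := Module.finrank ℝ W with hr
  let c := Module.finBasis ℝ W
  refine ⟨fun k => if h : (k : ℕ) < r then (c ⟨k, h⟩ : EuclideanSpace ℝ (Fin N)) else 0, ?_⟩
  apply le_antisymm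
  · rw [Submodule.span_le]
    rintro - ⟨k, rfl⟩
    by_cases h : (k : ℕ) < r
    · simp only [dif_pos h]; exact (c ⟨k, h⟩).2
    · simp only [dif_neg h]; exact W.zero_mem
  · intro w hw
    have : (⟨w, hw⟩ : W) ∈ Submodule.span ℝ (Set.range c) := by
      rw [c.span_eq]; trivial
    obtain ⟨co, hco⟩ := (Submodule.mem_span_range_iff_exists_fun ℝ).1 this
    have : w = ∑ k : Fin r, co k • (c k : EuclideanSpace ℝ (Fin N)) := by
      have := congrArg (Submodule.subtype W) hco
      simpa using this.symm
    rw [this]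
    apply Submodule.sum_mem
    intro k _
    apply Submodule.smul_mem
    apply Submodule.subset_span
    refine ⟨⟨k, lt_of_lt_of_le k.2 hW⟩, ?_⟩
    simp only [dif_pos (show ((⟨(k:ℕ), lt_of_lt_of_le k.2 hW⟩ : Fin n) : ℕ) < r from k.2)]; rfl

/-- An `(l, n, ε)`-sparse family admits a dictionary of at most `l·n` atoms and `n`-sparse
coefficient vectors approximating the data with total squared error at most `ε`. -/
theorem approx_dictionary_of_sparse {N m : ℕ} (f : Fin m → EuclideanSpace ℝ (Fin N))
    (l n : ℕ) (hl : 1 ≤ l) (hn : 1 ≤ n) (ε : ℝ) (hε : 0 ≤ ε)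
    (hsp : IsSparse l n ε f) :
    ∃ (s : ℕ), s ≤ l * n ∧
      ∃ (d : Fin s → EuclideanSpace ℝ (Fin N)) (x : Fin m → Fin s → ℝ),
        (∀ i, (Finset.univ.filter (fun k => x i k ≠ 0)).card ≤ n) ∧
        (∑ i, ‖f i - ∑ k, x i k • d k‖ ^ 2) ≤ ε := by
  obtain ⟨V, hVdim, hVsum⟩ := hsp
  haveI : NeZero l := ⟨(Nat.pos_of_ne_zero (by omega)).ne'⟩
  choose b hb using fun j => exists_span_fun (V j) (hVdim j)
  set e := finProdFinEquiv (m := l) (n := n)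
  -- for each i choose the best subspace
  have hmin : ∀ i, ∃ j : Fin l, ∀ j', infDist (f i) (V j : Set (EuclideanSpace ℝ (Fin N))) ^ 2
      ≤ infDist (f i) (V j' : Set (EuclideanSpace ℝ (Fin N))) ^ 2 :=
    fun i => Finite.exists_min _
  choose j hj using hmin
  -- projection and coefficients
  have hp : ∀ i, ∃ c : Fin n → ℝ,
      ∑ k, c k • b (j i) k = (Submodule.orthogonalProjectionOnto (V (j i)) (f i) : EuclideanSpace ℝ (Fin N)) := by
    intro i
    have hmem : (Submodule.orthogonalProjectionOnto (V (j i)) (f i) : EuclideanSpace ℝ (Fin N))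
        ∈ Submodule.span ℝ (Set.range (b (j i))) := by
      rw [hb]; exact (Submodule.orthogonalProjectionOnto (V (j i)) (f i)).2
    exact (Submodule.mem_span_range_iff_exists_fun ℝ).1 hmem
  choose c hc using hp
  refine ⟨l * n, le_rfl, fun t => b (e.symm t).1 (e.symm t).2,
    fun i t => if (e.symm t).1 = j i then c i (e.symm t).2 else 0, ?_, ?_⟩
  · intro i
    have hsub : (Finset.univ.filter
        (fun t => (if (e.symm t).1 = j i then c i (e.symm t).2 else 0) ≠ 0))
        ⊆ Finset.univ.image (fun k : Fin n => e (j i, k)) := by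
      intro t ht
      simp only [mem_filter, ne_eq, ite_eq_right_iff, not_forall] at ht
      obtain ⟨-, hjt, -⟩ := ht
      refine mem_image.2 ⟨(e.symm t).2, mem_univ _, ?_⟩
      rw [← hjt]
      simp [e.apply_symm_apply]
    calc _ ≤ (Finset.univ.image (fun k : Fin n => e (j i, k))).card := card_le_card hsub
      _ ≤ (Finset.univ : Finset (Fin n)).card := card_image_le
      _ = n := by simp
  · refine le_trans (Finset.sum_le_sum fun i _ => ?_) hVsum
    have hsum : (∑ t : Fin (l * n),
        (if (e.symm t).1 = j i then c i (e.symm t).2 else 0) • b (e.symm t).1 (e.symm t).2)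
        = (Submodule.orthogonalProjectionOnto (V (j i)) (f i) : EuclideanSpace ℝ (Fin N)) := by
      rw [← Equiv.sum_comp e (fun t =>
        (if (e.symm t).1 = j i then c i (e.symm t).2 else 0) • b (e.symm t).1 (e.symm t).2)]
      simp only [e.symm_apply_apply]
      rw [Fintype.sum_prod_type]
      have : ∀ j' : Fin l, (∑ k : Fin n, (if j' = j i then c i k else 0) • b j' k)
          = if j' = j i then (Submodule.orthogonalProjectionOnto (V (j i)) (f i) : EuclideanSpace ℝ (Fin N)) else 0 := by
        intro j'
        by_cases h : j' = j i
        · subst h; simp [hc i]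
        · simp [h]
      simp_rw [this]
      simp
    rw [hsum]
    have h1 : ‖f i - (Submodule.orthogonalProjectionOnto (V (j i)) (f i) : EuclideanSpace ℝ (Fin N))‖
        ≤ infDist (f i) (V (j i) : Set (EuclideanSpace ℝ (Fin N))) := by
      rw [infDist_eq_iInf]
      apply le_ciInf
      intro w
      rw [← Submodule.starProjection_apply, Submodule.starProjection_minimal, dist_eq_norm]
      exact ciInf_le ⟨0, Set.forall_mem_range.mpr fun _ => norm_nonneg _⟩ w
    calc ‖f i - (Submodule.orthogonalProjectionOnto (V (j i)) (f i) : EuclideanSpace ℝ (Fin N))‖ ^ 2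
        ≤ infDist (f i) (V (j i) : Set (EuclideanSpace ℝ (Fin N))) ^ 2 :=
          pow_le_pow_left₀ (norm_nonneg _) h1 2
      _ ≤ ⨅ j', infDist (f i) (V j' : Set (EuclideanSpace ℝ (Fin N))) ^ 2 := le_ciInf (hj i)
end
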